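/- arXiv:2511.15135 — 2 statements merged into one kernel-verified Lean document; each statement's English description precedes it below -/
import Mathlib

section
/- Let X be a ℚ-valued discrete random variable with g(a) := H[X - a X'] - H[X], where X' is an independent copy of X. Then for any a₁, a₂ ∈ ℚ one has the submultiplicativity bound g(a₁ a₂) ≤ g(a₁) + g(a₂). -/
open scoped Classical
open Finset

/-- Probability of an event under a weight function on a finite sample space. -/
noncomputable def prb {Ω : Type*} [Fintype Ω] (μ : Ω → ℝ) (E : Set Ω) : ℝ :=
  ∑ ω ∈ Finset.univ.filter (fun ω => ω ∈ E), μ ω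

/-- `μ` is a probability mass function on the finite space `Ω`. -/
def IsProb {Ω : Type*} [Fintype Ω] (μ : Ω → ℝ) : Prop :=
  (∀ ω, 0 ≤ μ ω) ∧ ∑ ω, μ ω = 1

/-- Shannon entropy of a random variable `X` on a finite probability space. -/
noncomputable def ent {Ω S : Type*} [Fintype Ω] (μ : Ω → ℝ) (X : Ω → S) : ℝ :=
  ∑ s ∈ Finset.univ.image X, Real.negMulLog (prb μ {ω | X ω = s})

/-- Independence of two random variables. -/
def IndepRV {Ω S T : Type*} [Fintype Ω] (μ : Ω → ℝ) (X : Ω → S) (Y : Ω → T) : Prop :=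
  ∀ x y, prb μ {ω | X ω = x ∧ Y ω = y} = prb μ {ω | X ω = x} * prb μ {ω | Y ω = y}

/-- Conditional Shannon entropy `H[X|Z] = H[X,Z] - H[Z]`. -/
noncomputable def condEnt {Ω S T : Type*} [Fintype Ω] (μ : Ω → ℝ) (X : Ω → S) (Z : Ω → T) : ℝ :=
  ent μ (fun ω => (X ω, Z ω)) - ent μ Z

/-- Entropic Ruzsa distance `d[X;Y] = H[X'-Y'] - H[X]/2 - H[Y]/2`,
realized on the product space so that the copies are independent. -/
noncomputable def rdist {Ω₁ Ω₂ : Type*} [Fintype Ω₁] [Fintype Ω₂]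
    (μ₁ : Ω₁ → ℝ) (μ₂ : Ω₂ → ℝ) (X : Ω₁ → ℚ) (Y : Ω₂ → ℚ) : ℝ :=
  ent (fun p : Ω₁ × Ω₂ => μ₁ p.1 * μ₂ p.2) (fun p => X p.1 - Y p.2)
    - ent μ₁ X / 2 - ent μ₂ Y / 2

/-- The quantity `g(a) = H[X - a X'] - H[X]`, where `X'` is an independent copy of `X`. -/
noncomputable def gfun {Ω : Type*} [Fintype Ω] (μ : Ω → ℝ) (X : Ω → ℚ) (a : ℚ) : ℝ :=
  ent (fun p : Ω × Ω => μ p.1 * μ p.2) (fun p => X p.1 - a * X p.2) - ent μ X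

/-- Projection `π_r(x,y) = x + r y` for a finite slope `some r`, and `π_∞(x,y) = y`. -/
noncomputable def pSlope : Option ℚ → ℚ × ℚ → ℚ
  | none, p => p.2
  | some r, p => p.1 + r * p.2

/-- The measure `μ` conditioned on the event `Z = z`. -/
noncomputable def condMeasure {Ω T : Type*} [Fintype Ω] (μ : Ω → ℝ) (Z : Ω → T) (z : T) :
    Ω → ℝ :=
  fun ω => if Z ω = z then μ ω / prb μ {ω' | Z ω' = z} else 0

/-- `E_{Z=z} d[X|Z=z ; X|Z=z]`, the averaged conditional entropic Ruzsa self-distance. -/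
noncomputable def condSelfDoubling {Ω T : Type*} [Fintype Ω] (μ : Ω → ℝ)
    (X : Ω → ℚ) (Z : Ω → T) : ℝ :=
  ∑ z ∈ Finset.univ.image Z, prb μ {ω | Z ω = z} *
    rdist (condMeasure μ Z z) (condMeasure μ Z z) X X

section aux
variable {Ω Ω' S T V : Type*} [Fintype Ω] [Fintype Ω']

lemma prb_eq_sum (μ : Ω → ℝ) (P : Ω → Prop) :
    prb μ {ω | P ω} = ∑ ω, if P ω then μ ω else 0 := by
  rw [prb, Finset.sum_filter]
  simp [Set.mem_setOf_eq]

lemma prb_congr (μ : Ω → ℝ) {P Q : Ω → Prop} (h : ∀ ω, P ω ↔ Q ω) :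
    prb μ {ω | P ω} = prb μ {ω | Q ω} := by
  congr 1; ext ω; exact h ω

lemma prb_nonneg {μ : Ω → ℝ} (hμ : ∀ ω, 0 ≤ μ ω) (E : Set Ω) : 0 ≤ prb μ E :=
  Finset.sum_nonneg fun ω _ => hμ ω

lemma prb_mono {μ : Ω → ℝ} (hμ : ∀ ω, 0 ≤ μ ω) {P Q : Ω → Prop}
    (h : ∀ ω, P ω → Q ω) : prb μ {ω | P ω} ≤ prb μ {ω | Q ω} := by
  rw [prb_eq_sum, prb_eq_sum]
  refine Finset.sum_le_sum fun ω _ => ?_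
  by_cases hP : P ω
  · simp [hP, h ω hP]
  · by_cases hQ : Q ω <;> simp [hP, hQ, hμ ω]

lemma prb_eq_zero {μ : Ω → ℝ} {P : Ω → Prop} (h : ∀ ω, ¬ P ω) :
    prb μ {ω | P ω} = 0 := by
  rw [prb_eq_sum]
  exact Finset.sum_eq_zero fun ω _ => by simp [h ω]

/-- partition identity -/
lemma prb_partition (μ : Ω → ℝ) (P : Ω → Prop) (W : Ω → V) (A : Finset V)
    (hA : Finset.univ.image W ⊆ A) :
    ∑ c ∈ A, prb μ {ω | P ω ∧ W ω = c} = prb μ {ω | P ω} := by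
  simp_rw [prb_eq_sum]
  rw [Finset.sum_comm]
  refine Finset.sum_congr rfl fun ω _ => ?_
  by_cases hP : P ω
  · simp only [hP, true_and]
    rw [Finset.sum_ite_eq A (W ω) (fun _ => μ ω)]
    simp [hA (Finset.mem_image_of_mem W (Finset.mem_univ ω))]
  · simp [hP]

lemma sum_prb (μ : Ω → ℝ) (W : Ω → V) (A : Finset V)
    (hA : Finset.univ.image W ⊆ A) :
    ∑ s ∈ A, prb μ {ω | W ω = s} = ∑ ω, μ ω := by
  have := prb_partition μ (fun _ => True) W A hA
  simp only [true_and] at this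
  rw [this, prb_eq_sum μ (fun _ => True)]
  simp

lemma ent_eq_sum_over (μ : Ω → ℝ) (W : Ω → S) (A : Finset S)
    (hA : ∀ ω : Ω, W ω ∈ A) :
    ent μ W = ∑ s ∈ A, Real.negMulLog (prb μ {ω | W ω = s}) := by
  rw [ent]
  refine Finset.sum_subset (fun x hx => ?_) fun s _ hs => ?_
  · rw [Finset.mem_image] at hx
    obtain ⟨ω, _, rfl⟩ := hx
    exact hA ω
  have h0 : ∀ ω, ¬ (W ω = s) := by
    intro ω h
    exact hs (h ▸ Finset.mem_image_of_mem W (Finset.mem_univ ω))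
  rw [prb_eq_zero h0, Real.negMulLog_zero]



lemma ent_congr_law (μ : Ω → ℝ) (ν : Ω' → ℝ) (W : Ω → S) (Y : Ω' → S)
    (h : ∀ s, prb μ {ω | W ω = s} = prb ν {ω | Y ω = s}) : ent μ W = ent ν Y := by
  rw [ent_eq_sum_over μ W (Finset.univ.image W ∪ Finset.univ.image Y)
        (fun ω => Finset.mem_union_left _ (Finset.mem_image_of_mem W (Finset.mem_univ ω))),
      ent_eq_sum_over ν Y (Finset.univ.image W ∪ Finset.univ.image Y)
        (fun ω => Finset.mem_union_right _ (Finset.mem_image_of_mem Y (Finset.mem_univ ω)))]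
  exact Finset.sum_congr rfl fun s _ => by rw [h s]

lemma ent_comp_inj (μ : Ω → ℝ) (W : Ω → S) (f : S → T) (hf : Function.Injective f) :
    ent μ (fun ω => f (W ω)) = ent μ W := by
  rw [ent, ent]
  have himg : Finset.univ.image (fun ω => f (W ω)) = (Finset.univ.image W).image f := by
    rw [Finset.image_image]; rfl
  rw [himg, Finset.sum_image (fun x _ y _ hxy => hf hxy)]
  refine Finset.sum_congr rfl fun s _ => ?_
  congr 1
  exact prb_congr μ fun ω => by simp [hf.eq_iff]

lemma ent_const_zero (μ : Ω → ℝ) (hμ : IsProb μ) (c : S) :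
    ent μ (fun _ => c) = 0 := by
  have hne : Nonempty Ω := by
    by_contra h
    rw [not_nonempty_iff] at h
    have := hμ.2
    rw [Finset.univ_eq_empty, Finset.sum_empty] at this
    norm_num at this
  rw [ent]
  have : (Finset.univ.image fun _ : Ω => c) = {c} := by
    rw [Finset.image_const Finset.univ_nonempty c]
  rw [this, Finset.sum_singleton]
  have : prb μ {ω : Ω | c = c} = 1 := by
    rw [prb_eq_sum]; simpa using hμ.2
  rw [this, Real.negMulLog_one]

lemma prb_prod {Ω₁ Ω₂ : Type*} [Fintype Ω₁] [Fintype Ω₂] (μ₁ : Ω₁ → ℝ) (μ₂ : Ω₂ → ℝ)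
    (P : Ω₁ → Prop) (Q : Ω₂ → Prop) :
    prb (fun p : Ω₁ × Ω₂ => μ₁ p.1 * μ₂ p.2) {p | P p.1 ∧ Q p.2}
      = prb μ₁ {ω | P ω} * prb μ₂ {ω | Q ω} := by
  rw [prb_eq_sum, prb_eq_sum, prb_eq_sum, Fintype.sum_prod_type, Finset.sum_mul_sum]
  refine Finset.sum_congr rfl fun ω₁ _ => Finset.sum_congr rfl fun ω₂ _ => ?_
  by_cases h1 : P ω₁ <;> by_cases h2 : Q ω₂ <;> simp [h1, h2]

lemma IsProb_prod {Ω₁ Ω₂ : Type*} [Fintype Ω₁] [Fintype Ω₂] {μ₁ : Ω₁ → ℝ} {μ₂ : Ω₂ → ℝ}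
    (h₁ : IsProb μ₁) (h₂ : IsProb μ₂) :
    IsProb (fun p : Ω₁ × Ω₂ => μ₁ p.1 * μ₂ p.2) := by
  constructor
  · exact fun p => mul_nonneg (h₁.1 p.1) (h₂.1 p.2)
  · rw [Fintype.sum_prod_type]
    simp_rw [← Finset.mul_sum, h₂.2, mul_one]
    exact h₁.2

lemma ent_pair_indep {Ω₁ Ω₂ : Type*} [Fintype Ω₁] [Fintype Ω₂] (μ₁ : Ω₁ → ℝ) (μ₂ : Ω₂ → ℝ)
    (h₁ : IsProb μ₁) (h₂ : IsProb μ₂) (F : Ω₁ → S) (G : Ω₂ → T) :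
    ent (fun p : Ω₁ × Ω₂ => μ₁ p.1 * μ₂ p.2) (fun p => (F p.1, G p.2))
      = ent μ₁ F + ent μ₂ G := by
  have e := ent_eq_sum_over (fun p : Ω₁ × Ω₂ => μ₁ p.1 * μ₂ p.2)
      (fun p => (F p.1, G p.2)) ((Finset.univ.image F) ×ˢ (Finset.univ.image G))
      (fun p => Finset.mem_product.mpr ⟨Finset.mem_image_of_mem _ (Finset.mem_univ _),
          Finset.mem_image_of_mem _ (Finset.mem_univ _)⟩)
  rw [e, Finset.sum_product]
  have hev : ∀ (s : S) (t : T),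
      prb (fun p : Ω₁ × Ω₂ => μ₁ p.1 * μ₂ p.2) {p | (F p.1, G p.2) = (s, t)}
        = prb μ₁ {ω | F ω = s} * prb μ₂ {ω | G ω = t} := by
    intro s t
    rw [← prb_prod]
    exact prb_congr _ fun p => by simp [Prod.ext_iff]
  simp_rw [hev, Real.negMulLog_mul]
  have hG1 : ∑ t ∈ Finset.univ.image G, prb μ₂ {ω | G ω = t} = 1 := by
    rw [sum_prb μ₂ G _ (le_refl _), h₂.2]
  have hF1 : ∑ s ∈ Finset.univ.image F, prb μ₁ {ω | F ω = s} = 1 := by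
    rw [sum_prb μ₁ F _ (le_refl _), h₁.2]
  have inner : ∀ s : S, ∑ t ∈ Finset.univ.image G,
      (prb μ₂ {ω | G ω = t} * Real.negMulLog (prb μ₁ {ω | F ω = s})
        + prb μ₁ {ω | F ω = s} * Real.negMulLog (prb μ₂ {ω | G ω = t}))
      = Real.negMulLog (prb μ₁ {ω | F ω = s}) + prb μ₁ {ω | F ω = s} * ent μ₂ G := by
    intro s
    rw [Finset.sum_add_distrib, ← Finset.sum_mul, hG1, one_mul, ← Finset.mul_sum, ent]
  simp_rw [inner]
  rw [Finset.sum_add_distrib, ← Finset.sum_mul, hF1, one_mul, ent, ent]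

private lemma neg_sum_mul {α : Type*} (s : Finset α) (f : α → ℝ) (L : ℝ) :
    -(∑ x ∈ s, f x) * L = ∑ x ∈ s, -(f x * L) := by
  rw [neg_mul, Finset.sum_mul, ← Finset.sum_neg_distrib]

lemma ent_submod (μ : Ω → ℝ) (hμ : IsProb μ) (A : Ω → S) (B : Ω → T) (C : Ω → V) :
    ent μ (fun ω => (A ω, (B ω, C ω))) + ent μ B
      ≤ ent μ (fun ω => (A ω, B ω)) + ent μ (fun ω => (B ω, C ω)) := by
  set sA := Finset.univ.image A with hsA
  set sB := Finset.univ.image B with hsB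
  set sC := Finset.univ.image C with hsC
  set p3 : S → T → V → ℝ := fun a b c => prb μ {ω | (A ω = a ∧ B ω = b) ∧ C ω = c} with hp3
  set pAB : S → T → ℝ := fun a b => prb μ {ω | A ω = a ∧ B ω = b} with hpAB
  set pBC : T → V → ℝ := fun b c => prb μ {ω | B ω = b ∧ C ω = c} with hpBC
  set pB : T → ℝ := fun b => prb μ {ω | B ω = b} with hpB
  -- marginalization identities
  have hABc : ∀ a b, pAB a b = ∑ c ∈ sC, p3 a b c := by
    intro a b
    simp only [hpAB, hp3]
    exact (prb_partition μ (fun ω => A ω = a ∧ B ω = b) C sC (le_refl _)).symm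
  have hBCa : ∀ b c, pBC b c = ∑ a ∈ sA, p3 a b c := by
    intro b c
    simp only [hpBC, hp3]
    rw [← prb_partition μ (fun ω => B ω = b ∧ C ω = c) A sA (le_refl _)]
    exact Finset.sum_congr rfl fun a _ => prb_congr μ fun ω => by tauto
  have hBa : ∀ b, pB b = ∑ a ∈ sA, pAB a b := by
    intro b
    simp only [hpB, hpAB]
    rw [← prb_partition μ (fun ω => B ω = b) A sA (le_refl _)]
    exact Finset.sum_congr rfl fun a _ => prb_congr μ fun ω => by tauto
  have hBc : ∀ b, pB b = ∑ c ∈ sC, pBC b c := by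
    intro b
    simp only [hpB, hpBC]
    exact (prb_partition μ (fun ω => B ω = b) C sC (le_refl _)).symm
  -- nonnegativity and monotonicity
  have hp3nn : ∀ a b c, 0 ≤ p3 a b c := fun a b c => prb_nonneg hμ.1 _
  have hABnn : ∀ a b, 0 ≤ pAB a b := fun a b => prb_nonneg hμ.1 _
  have hBCnn : ∀ b c, 0 ≤ pBC b c := fun b c => prb_nonneg hμ.1 _
  have hBnn : ∀ b, 0 ≤ pB b := fun b => prb_nonneg hμ.1 _
  have hleAB : ∀ a b c, p3 a b c ≤ pAB a b := fun a b c =>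
    prb_mono hμ.1 fun ω h => h.1
  have hleBC : ∀ a b c, p3 a b c ≤ pBC b c := fun a b c =>
    prb_mono hμ.1 fun ω h => ⟨h.1.2, h.2⟩
  have hleB : ∀ a b c, p3 a b c ≤ pB b := fun a b c =>
    prb_mono hμ.1 fun ω h => h.1.2
  -- total mass
  have hBsum : ∑ b ∈ sB, pB b = 1 := by
    simp only [hpB, hsB]
    rw [sum_prb μ B _ (le_refl _)]
    exact hμ.2
  have htot : ∑ a ∈ sA, ∑ b ∈ sB, ∑ c ∈ sC, p3 a b c = 1 := by
    simp_rw [← hABc]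
    rw [Finset.sum_comm]
    simp_rw [← hBa]
    exact hBsum
  -- entropy expansions
  have eB : ent μ B = ∑ b ∈ sB, Real.negMulLog (pB b) :=
    ent_eq_sum_over μ B sB fun ω => Finset.mem_image_of_mem B (Finset.mem_univ ω)
  have eAB : ent μ (fun ω => (A ω, B ω)) = ∑ a ∈ sA, ∑ b ∈ sB, Real.negMulLog (pAB a b) := by
    rw [ent_eq_sum_over μ (fun ω => (A ω, B ω)) (sA ×ˢ sB)
        (fun ω => Finset.mem_product.mpr ⟨Finset.mem_image_of_mem _ (Finset.mem_univ _),
          Finset.mem_image_of_mem _ (Finset.mem_univ _)⟩), Finset.sum_product]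
    refine Finset.sum_congr rfl fun a _ => Finset.sum_congr rfl fun b _ => ?_
    congr 1
    exact prb_congr μ fun ω => by simp [Prod.ext_iff]
  have eBC : ent μ (fun ω => (B ω, C ω)) = ∑ b ∈ sB, ∑ c ∈ sC, Real.negMulLog (pBC b c) := by
    rw [ent_eq_sum_over μ (fun ω => (B ω, C ω)) (sB ×ˢ sC)
        (fun ω => Finset.mem_product.mpr ⟨Finset.mem_image_of_mem _ (Finset.mem_univ _),
          Finset.mem_image_of_mem _ (Finset.mem_univ _)⟩), Finset.sum_product]
    refine Finset.sum_congr rfl fun b _ => Finset.sum_congr rfl fun c _ => ?_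
    congr 1
    exact prb_congr μ fun ω => by simp [Prod.ext_iff]
  have e3 : ent μ (fun ω => (A ω, (B ω, C ω)))
      = ∑ a ∈ sA, ∑ b ∈ sB, ∑ c ∈ sC, Real.negMulLog (p3 a b c) := by
    rw [ent_eq_sum_over μ (fun ω => (A ω, (B ω, C ω))) (sA ×ˢ (sB ×ˢ sC))
        (fun ω => Finset.mem_product.mpr ⟨Finset.mem_image_of_mem _ (Finset.mem_univ _),
          Finset.mem_product.mpr ⟨Finset.mem_image_of_mem _ (Finset.mem_univ _),
            Finset.mem_image_of_mem _ (Finset.mem_univ _)⟩⟩), Finset.sum_product]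
    refine Finset.sum_congr rfl fun a _ => ?_
    rw [Finset.sum_product]
    refine Finset.sum_congr rfl fun b _ => Finset.sum_congr rfl fun c _ => ?_
    congr 1
    refine prb_congr μ fun ω => ?_
    constructor
    · intro h
      rw [Prod.ext_iff] at h
      obtain ⟨h1, h2⟩ := h
      rw [Prod.ext_iff] at h2
      exact ⟨⟨h1, h2.1⟩, h2.2⟩
    · intro h
      rw [Prod.ext_iff, Prod.ext_iff]
      exact ⟨h.1.1, h.1.2, h.2⟩
  -- expansions into triple sums
  have EAB : ∑ a ∈ sA, ∑ b ∈ sB, Real.negMulLog (pAB a b)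
      = ∑ a ∈ sA, ∑ b ∈ sB, ∑ c ∈ sC, (-(p3 a b c * Real.log (pAB a b))) := by
    refine Finset.sum_congr rfl fun a _ => Finset.sum_congr rfl fun b _ => ?_
    rw [Real.negMulLog, show pAB a b = ∑ c ∈ sC, p3 a b c from hABc a b]
    rw [neg_sum_mul]
  have EBC : ∑ b ∈ sB, ∑ c ∈ sC, Real.negMulLog (pBC b c)
      = ∑ a ∈ sA, ∑ b ∈ sB, ∑ c ∈ sC, (-(p3 a b c * Real.log (pBC b c))) := by
    have step : ∀ b c, Real.negMulLog (pBC b c)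
        = ∑ a ∈ sA, (-(p3 a b c * Real.log (pBC b c))) := by
      intro b c
      rw [Real.negMulLog, show pBC b c = ∑ a ∈ sA, p3 a b c from hBCa b c]
      rw [neg_sum_mul]
    calc ∑ b ∈ sB, ∑ c ∈ sC, Real.negMulLog (pBC b c)
        = ∑ b ∈ sB, ∑ c ∈ sC, ∑ a ∈ sA, (-(p3 a b c * Real.log (pBC b c))) :=
          Finset.sum_congr rfl fun b _ => Finset.sum_congr rfl fun c _ => step b c
      _ = ∑ b ∈ sB, ∑ a ∈ sA, ∑ c ∈ sC, (-(p3 a b c * Real.log (pBC b c))) :=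
          Finset.sum_congr rfl fun b _ => Finset.sum_comm
      _ = ∑ a ∈ sA, ∑ b ∈ sB, ∑ c ∈ sC, (-(p3 a b c * Real.log (pBC b c))) := Finset.sum_comm
  have EB : ∑ b ∈ sB, Real.negMulLog (pB b)
      = ∑ a ∈ sA, ∑ b ∈ sB, ∑ c ∈ sC, (-(p3 a b c * Real.log (pB b))) := by
    have step : ∀ b, Real.negMulLog (pB b)
        = ∑ a ∈ sA, ∑ c ∈ sC, (-(p3 a b c * Real.log (pB b))) := by
      intro b
      have h1 : pB b = ∑ a ∈ sA, ∑ c ∈ sC, p3 a b c := by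
        rw [hBa b]
        exact Finset.sum_congr rfl fun a _ => hABc a b
      rw [Real.negMulLog, h1, neg_sum_mul]
      refine Finset.sum_congr rfl fun a _ => ?_
      rw [← neg_mul, neg_sum_mul]
    calc ∑ b ∈ sB, Real.negMulLog (pB b)
        = ∑ b ∈ sB, ∑ a ∈ sA, ∑ c ∈ sC, (-(p3 a b c * Real.log (pB b))) :=
          Finset.sum_congr rfl fun b _ => step b
      _ = ∑ a ∈ sA, ∑ b ∈ sB, ∑ c ∈ sC, (-(p3 a b c * Real.log (pB b))) := Finset.sum_comm
  rw [eB, eAB, eBC, e3, EAB, EBC, EB]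
  -- the Gibbs-type bound
  set q : S → T → V → ℝ :=
    fun a b c => if 0 < pB b then pAB a b * pBC b c / pB b else 0 with hq
  have hqnn : ∀ a b c, 0 ≤ q a b c := by
    intro a b c
    simp only [hq]
    split
    · rename_i h
      have := hABnn a b
      have := hBCnn b c
      positivity
    · exact le_rfl
  have hterm : ∀ a b c, p3 a b c - q a b c
      ≤ (-(p3 a b c * Real.log (pAB a b))) + (-(p3 a b c * Real.log (pBC b c)))
        - Real.negMulLog (p3 a b c) - (-(p3 a b c * Real.log (pB b))) := by
    intro a b c
    by_cases hpos : 0 < p3 a b c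
    · have h1 : 0 < pAB a b := lt_of_lt_of_le hpos (hleAB a b c)
      have h2 : 0 < pBC b c := lt_of_lt_of_le hpos (hleBC a b c)
      have h3 : 0 < pB b := lt_of_lt_of_le hpos (hleB a b c)
      have hqv : q a b c = pAB a b * pBC b c / pB b := by simp only [hq]; rw [if_pos h3]
      set t : ℝ := pAB a b * pBC b c / (pB b * p3 a b c) with ht
      have htpos : 0 < t := by rw [ht]; positivity
      have hlog : Real.log t ≤ t - 1 := Real.log_le_sub_one_of_pos htpos
      have hlogt : Real.log t = Real.log (pAB a b) + Real.log (pBC b c)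
          - Real.log (pB b) - Real.log (p3 a b c) := by
        rw [ht, Real.log_div (by positivity) (by positivity),
          Real.log_mul h1.ne' h2.ne', Real.log_mul h3.ne' hpos.ne']
        ring
      have hmul : p3 a b c * Real.log t ≤ p3 a b c * t - p3 a b c := by
        nlinarith [hpos.le]
      have hpt : p3 a b c * t = pAB a b * pBC b c / pB b := by
        rw [ht]
        field_simp
      rw [Real.negMulLog, hqv]
      nlinarith [hmul, hpt, hlogt]
    · have hz : p3 a b c = 0 := le_antisymm (not_lt.mp hpos) (hp3nn a b c)
      rw [hz]
      simp only [Real.negMulLog_zero, zero_mul, neg_zero, zero_sub, sub_zero, add_zero, zero_add]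
      linarith [hqnn a b c]
  have hqsum : ∑ a ∈ sA, ∑ b ∈ sB, ∑ c ∈ sC, q a b c ≤ 1 := by
    rw [Finset.sum_comm]
    have perb : ∀ b ∈ sB, ∑ a ∈ sA, ∑ c ∈ sC, q a b c ≤ pB b := by
      intro b _
      by_cases h3 : 0 < pB b
      · have hqe : ∑ a ∈ sA, ∑ c ∈ sC, q a b c
            = (∑ a ∈ sA, pAB a b) * (∑ c ∈ sC, pBC b c) / pB b := by
          simp only [hq, if_pos h3]
          rw [Finset.sum_mul, Finset.sum_div]
          refine Finset.sum_congr rfl fun a _ => ?_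
          rw [Finset.mul_sum, Finset.sum_div]
        rw [hqe, ← hBa, ← hBc]
        rw [mul_div_assoc, div_self h3.ne', mul_one]
      · have hz : ∀ a ∈ sA, ∀ c ∈ sC, q a b c = 0 := by
          intro a _ c _
          simp only [hq]
          rw [if_neg h3]
        calc ∑ a ∈ sA, ∑ c ∈ sC, q a b c
            = 0 := Finset.sum_eq_zero fun a ha =>
              Finset.sum_eq_zero fun c hc => hz a ha c hc
          _ ≤ pB b := hBnn b
    calc ∑ b ∈ sB, ∑ a ∈ sA, ∑ c ∈ sC, q a b c ≤ ∑ b ∈ sB, pB b :=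
          Finset.sum_le_sum perb
      _ = 1 := hBsum
  have hsum_te : ∑ a ∈ sA, ∑ b ∈ sB, ∑ c ∈ sC, (p3 a b c - q a b c)
      ≤ ∑ a ∈ sA, ∑ b ∈ sB, ∑ c ∈ sC,
          ((-(p3 a b c * Real.log (pAB a b))) + (-(p3 a b c * Real.log (pBC b c)))
            - Real.negMulLog (p3 a b c) - (-(p3 a b c * Real.log (pB b)))) :=
    Finset.sum_le_sum fun a _ => Finset.sum_le_sum fun b _ =>
      Finset.sum_le_sum fun c _ => hterm a b c
  simp only [Finset.sum_sub_distrib, Finset.sum_add_distrib] at hsum_te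
  rw [htot] at hsum_te
  linarith [hsum_te, hqsum]

lemma ent_pair_le (μ : Ω → ℝ) (hμ : IsProb μ) (A : Ω → S) (C : Ω → V) :
    ent μ (fun ω => (A ω, C ω)) ≤ ent μ A + ent μ C := by
  have h := ent_submod μ hμ A (fun _ => (0:ℕ)) C
  have e1 : ent μ (fun ω => (A ω, ((0:ℕ), C ω))) = ent μ (fun ω => (A ω, C ω)) :=
    ent_comp_inj μ (fun ω => (A ω, C ω)) (fun x => (x.1, ((0:ℕ), x.2)))
      (fun x y hxy => by simpa [Prod.ext_iff] using hxy)
  have e2 : ent μ (fun ω => (A ω, (0:ℕ))) = ent μ A :=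
    ent_comp_inj μ A (fun a => (a, (0:ℕ)))
      (fun x y hxy => by simpa [Prod.ext_iff] using hxy)
  have e3 : ent μ (fun ω => ((0:ℕ), C ω)) = ent μ C :=
    ent_comp_inj μ C (fun c => ((0:ℕ), c))
      (fun x y hxy => by simpa [Prod.ext_iff] using hxy)
  have e4 : ent μ (fun _ : Ω => (0:ℕ)) = 0 := ent_const_zero μ hμ 0
  rw [e1, e2, e3, e4] at h
  linarith

lemma prb_fst {Ω₁ Ω₂ : Type*} [Fintype Ω₁] [Fintype Ω₂] (μ₁ : Ω₁ → ℝ) (μ₂ : Ω₂ → ℝ)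
    (h2 : ∑ ω, μ₂ ω = 1) (P : Ω₁ → Prop) :
    prb (fun p : Ω₁ × Ω₂ => μ₁ p.1 * μ₂ p.2) {p | P p.1} = prb μ₁ {ω | P ω} := by
  rw [prb_eq_sum, prb_eq_sum]
  rw [Fintype.sum_prod_type]
  refine Finset.sum_congr rfl fun ω₁ _ => ?_
  by_cases h : P ω₁
  · simp only [h, if_true]
    rw [← Finset.mul_sum, h2, mul_one]
  · simp [h]

lemma prb_snd {Ω₁ Ω₂ : Type*} [Fintype Ω₁] [Fintype Ω₂] (μ₁ : Ω₁ → ℝ) (μ₂ : Ω₂ → ℝ)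
    (h1 : ∑ ω, μ₁ ω = 1) (Q : Ω₂ → Prop) :
    prb (fun p : Ω₁ × Ω₂ => μ₁ p.1 * μ₂ p.2) {p | Q p.2} = prb μ₂ {ω | Q ω} := by
  rw [prb_eq_sum, prb_eq_sum]
  rw [Fintype.sum_prod_type]
  have step : ∀ ω₁, (∑ ω₂, if Q ω₂ then μ₁ ω₁ * μ₂ ω₂ else 0)
      = μ₁ ω₁ * ∑ ω₂, (if Q ω₂ then μ₂ ω₂ else 0) := by
    intro ω₁
    rw [Finset.mul_sum]
    exact Finset.sum_congr rfl fun ω₂ _ => by by_cases h : Q ω₂ <;> simp [h]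
  simp_rw [step]
  rw [← Finset.sum_mul, h1, one_mul]

lemma prb3_12 (μ : Ω → ℝ) (hsum : ∑ ω, μ ω = 1) (W : Ω → Ω → Prop) :
    prb (fun t : Ω × Ω × Ω => μ t.1 * (μ t.2.1 * μ t.2.2)) {t | W t.1 t.2.1}
      = prb (fun p : Ω × Ω => μ p.1 * μ p.2) {p | W p.1 p.2} := by
  rw [prb_eq_sum, prb_eq_sum]
  simp only [Fintype.sum_prod_type]
  refine Finset.sum_congr rfl fun ω₁ _ => Finset.sum_congr rfl fun ω₂ _ => ?_
  by_cases h : W ω₁ ω₂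
  · simp only [h, if_true]
    calc ∑ ω₃, μ ω₁ * (μ ω₂ * μ ω₃) = ∑ ω₃, μ ω₃ * (μ ω₁ * μ ω₂) :=
          Finset.sum_congr rfl fun _ _ => by ring
      _ = (∑ ω₃, μ ω₃) * (μ ω₁ * μ ω₂) := (Finset.sum_mul _ _ _).symm
      _ = μ ω₁ * μ ω₂ := by rw [hsum, one_mul]
  · simp [h]

lemma prb3_13 (μ : Ω → ℝ) (hsum : ∑ ω, μ ω = 1) (W : Ω → Ω → Prop) :
    prb (fun t : Ω × Ω × Ω => μ t.1 * (μ t.2.1 * μ t.2.2)) {t | W t.1 t.2.2}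
      = prb (fun p : Ω × Ω => μ p.1 * μ p.2) {p | W p.1 p.2} := by
  rw [prb_eq_sum, prb_eq_sum]
  simp only [Fintype.sum_prod_type]
  refine Finset.sum_congr rfl fun ω₁ _ => ?_
  rw [Finset.sum_comm]
  refine Finset.sum_congr rfl fun ω₃ _ => ?_
  by_cases h : W ω₁ ω₃
  · simp only [h, if_true]
    calc ∑ ω₂, μ ω₁ * (μ ω₂ * μ ω₃) = ∑ ω₂, μ ω₂ * (μ ω₁ * μ ω₃) :=
          Finset.sum_congr rfl fun _ _ => by ring
      _ = (∑ ω₂, μ ω₂) * (μ ω₁ * μ ω₃) := (Finset.sum_mul _ _ _).symm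
      _ = μ ω₁ * μ ω₃ := by rw [hsum, one_mul]
  · simp [h]

lemma prb3_factor (μ : Ω → ℝ) (P Q R : Ω → Prop) :
    prb (fun t : Ω × Ω × Ω => μ t.1 * (μ t.2.1 * μ t.2.2)) {t | P t.1 ∧ (Q t.2.1 ∧ R t.2.2)}
      = prb μ {ω | P ω} * (prb μ {ω | Q ω} * prb μ {ω | R ω}) := by
  have h1 : prb (fun t : Ω × Ω × Ω => μ t.1 * (μ t.2.1 * μ t.2.2))
      {t | P t.1 ∧ (Q t.2.1 ∧ R t.2.2)}
      = prb μ {ω | P ω} * prb (fun p : Ω × Ω => μ p.1 * μ p.2) {p | Q p.1 ∧ R p.2} :=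
    prb_prod μ (fun p : Ω × Ω => μ p.1 * μ p.2) P (fun p => Q p.1 ∧ R p.2)
  rw [h1, prb_prod μ μ Q R]

end aux

/-- submultiplicativity `g(a₁ a₂) ≤ g(a₁) + g(a₂)`. -/
theorem gfun_mul_le {Ω : Type*} [Fintype Ω] (μ : Ω → ℝ) (hμ : IsProb μ)
    (X : Ω → ℚ) (a₁ a₂ : ℚ) :
    gfun μ X (a₁ * a₂) ≤ gfun μ X a₁ + gfun μ X a₂ := by
  have hν : IsProb (fun p : Ω × Ω => μ p.1 * μ p.2) := IsProb_prod hμ hμ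
  by_cases hu : a₁ = 0
  · -- reduces to 0 ≤ gfun μ X a₂
    subst hu
    rw [zero_mul]
    have key : 0 ≤ gfun μ X a₂ := by
      have h1 : ent (fun p : Ω × Ω => μ p.1 * μ p.2) (fun p => (X p.1, X p.2))
          = ent μ X + ent μ X := ent_pair_indep μ μ hμ hμ X X
      have h2 : ent (fun p : Ω × Ω => μ p.1 * μ p.2)
          (fun p => (X p.1 - a₂ * X p.2, X p.2))
          = ent (fun p : Ω × Ω => μ p.1 * μ p.2) (fun p => (X p.1, X p.2)) := by
        have e := ent_comp_inj (fun p : Ω × Ω => μ p.1 * μ p.2)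
          (fun p => (X p.1 - a₂ * X p.2, X p.2))
          (fun x : ℚ × ℚ => (x.1 + a₂ * x.2, x.2))
          (fun x y hxy => by
            simp only [Prod.ext_iff] at hxy ⊢
            obtain ⟨hxy1, hxy2⟩ := hxy
            rw [hxy2] at hxy1
            exact ⟨by linarith, hxy2⟩)
        rw [← e]
        congr 1
        funext p
        simp only [Prod.mk.injEq]
        refine ⟨by ring, trivial⟩
      have h3 : ent (fun p : Ω × Ω => μ p.1 * μ p.2)
          (fun p => (X p.1 - a₂ * X p.2, X p.2))
          ≤ ent (fun p : Ω × Ω => μ p.1 * μ p.2) (fun p => X p.1 - a₂ * X p.2)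
            + ent (fun p : Ω × Ω => μ p.1 * μ p.2) (fun p => X p.2) :=
        ent_pair_le _ hν _ _
      have h4 : ent (fun p : Ω × Ω => μ p.1 * μ p.2) (fun p => X p.2) = ent μ X :=
        ent_congr_law _ _ _ _ (fun s => prb_snd μ μ hμ.2 (fun ω => X ω = s))
      rw [gfun]
      rw [h2, h1, h4] at h3
      linarith
    linarith
  · -- main case
    set v : ℚ := a₁ * a₂ with hv
    set ν : (Ω × Ω) → ℝ := fun p => μ p.1 * μ p.2 with hνdef
    set μ3 : (Ω × Ω × Ω) → ℝ := fun t => μ t.1 * (μ t.2.1 * μ t.2.2) with hμ3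
    have hμ3p : IsProb μ3 := IsProb_prod hμ (IsProb_prod hμ hμ)
    set A : (Ω × Ω × Ω) → ℚ := fun t => X t.1 - a₁ * X t.2.1 with hA
    set B : (Ω × Ω × Ω) → ℚ := fun t => X t.1 - v * X t.2.2 with hB
    set C : (Ω × Ω × Ω) → ℚ := fun t => v * X t.2.2 with hC
    have h0 := ent_submod μ3 hμ3p A B C
    set H : ℝ := ent μ X with hH
    -- ent μ3 A
    have eA : ent μ3 A = gfun μ X a₁ + H := by
      have := ent_congr_law μ3 ν A (fun p => X p.1 - a₁ * X p.2)
        (fun s => prb3_12 μ hμ.2 (fun x y => X x - a₁ * X y = s))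
      rw [this, gfun]
      ring
    -- ent μ3 B
    have eB : ent μ3 B = gfun μ X v + H := by
      have := ent_congr_law μ3 ν B (fun p => X p.1 - v * X p.2)
        (fun s => prb3_13 μ hμ.2 (fun x y => X x - v * X y = s))
      rw [this, gfun]
      ring
    -- ent μ3 of the pair (A, B) is at most gfun a₁ + gfun a₂ + 2 H
    have eAB : ent μ3 (fun t => (A t, B t)) ≤ (gfun μ X a₁ + H) + (gfun μ X a₂ + H) := by
      have s1 : ent μ3 (fun t => (A t, B t - A t)) = ent μ3 (fun t => (A t, B t)) :=
        ent_comp_inj μ3 (fun t => (A t, B t)) (fun x : ℚ × ℚ => (x.1, x.2 - x.1))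
          (fun x y hxy => by
            simp only [Prod.ext_iff] at hxy ⊢
            obtain ⟨h1, h2⟩ := hxy
            exact ⟨h1, by linarith⟩)
      have s2 : (fun t : Ω × Ω × Ω => (A t, B t - A t))
          = (fun t : Ω × Ω × Ω => (A t, a₁ * (X t.2.1 - a₂ * X t.2.2))) := by
        funext t
        simp only [hA, hB, hv, Prod.mk.injEq]
        refine ⟨trivial, by ring⟩
      have s3 : ent μ3 (fun t => (A t, a₁ * (X t.2.1 - a₂ * X t.2.2)))
          ≤ ent μ3 A + ent μ3 (fun t => a₁ * (X t.2.1 - a₂ * X t.2.2)) :=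
        ent_pair_le μ3 hμ3p _ _
      have s4 : ent μ3 (fun t => a₁ * (X t.2.1 - a₂ * X t.2.2))
          = ent μ3 (fun t => X t.2.1 - a₂ * X t.2.2) :=
        ent_comp_inj μ3 (fun t => X t.2.1 - a₂ * X t.2.2) (fun q : ℚ => a₁ * q)
          (mul_right_injective₀ hu)
      have s5 : ent μ3 (fun t => X t.2.1 - a₂ * X t.2.2)
          = ent ν (fun p => X p.1 - a₂ * X p.2) :=
        ent_congr_law μ3 ν _ _
          (fun s => prb_snd μ ν hμ.2 (fun p => X p.1 - a₂ * X p.2 = s))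
      have s6 : ent ν (fun p => X p.1 - a₂ * X p.2) = gfun μ X a₂ + H := by
        rw [gfun]; ring
      rw [s4, s5, s6, eA] at s3
      calc ent μ3 (fun t => (A t, B t))
          = ent μ3 (fun t => (A t, a₁ * (X t.2.1 - a₂ * X t.2.2))) := by rw [← s1, s2]
        _ ≤ gfun μ X a₁ + H + (gfun μ X a₂ + H) := s3
    -- ent μ3 of the pair (B, C)
    set K : ℝ := ent ν (fun p => (X p.1, v * X p.2)) with hK
    have eBC : ent μ3 (fun t => (B t, C t)) = K := by
      have s1 : ent μ3 (fun t => (B t + C t, C t)) = ent μ3 (fun t => (B t, C t)) :=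
        ent_comp_inj μ3 (fun t => (B t, C t)) (fun x : ℚ × ℚ => (x.1 + x.2, x.2))
          (fun x y hxy => by
            simp only [Prod.ext_iff] at hxy ⊢
            obtain ⟨h1, h2⟩ := hxy
            exact ⟨by linarith, h2⟩)
      have s2 : (fun t : Ω × Ω × Ω => (B t + C t, C t))
          = (fun t : Ω × Ω × Ω => (X t.1, v * X t.2.2)) := by
        funext t
        simp only [hB, hC, Prod.mk.injEq]
        refine ⟨by ring, trivial⟩
      have s3 : ent μ3 (fun t => (X t.1, v * X t.2.2))
          = ent ν (fun p => (X p.1, v * X p.2)) :=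
        ent_congr_law μ3 ν _ _
          (fun s => prb3_13 μ hμ.2 (fun x y => (X x, v * X y) = s))
      rw [← s1, s2, s3]
    -- ent μ3 of the triple
    have e3 : ent μ3 (fun t => (A t, (B t, C t))) = K + H := by
      have s1 : ent μ3 (fun t => ((B t + C t, C t), B t + C t - A t))
          = ent μ3 (fun t => (A t, (B t, C t))) :=
        ent_comp_inj μ3 (fun t => (A t, (B t, C t)))
          (fun x : ℚ × (ℚ × ℚ) => ((x.2.1 + x.2.2, x.2.2), x.2.1 + x.2.2 - x.1))
          (fun x y hxy => by
            simp only [Prod.ext_iff] at hxy ⊢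
            obtain ⟨⟨h1, h2⟩, h3⟩ := hxy
            refine ⟨by linarith, by linarith, h2⟩)
      have s2 : (fun t : Ω × Ω × Ω => ((B t + C t, C t), B t + C t - A t))
          = (fun t : Ω × Ω × Ω => ((X t.1, v * X t.2.2), a₁ * X t.2.1)) := by
        funext t
        simp only [hA, hB, hC, Prod.mk.injEq]
        refine ⟨⟨by ring, trivial⟩, by ring⟩
      have s3 : ent μ3 (fun t => ((X t.1, v * X t.2.2), a₁ * X t.2.1))
          = ent (fun r : (Ω × Ω) × Ω => ν r.1 * μ r.2)
              (fun r => ((X r.1.1, v * X r.1.2), a₁ * X r.2)) := by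
        refine ent_congr_law _ _ _ _ (fun z => ?_)
        have lhs : prb μ3 {t | ((X t.1, v * X t.2.2), a₁ * X t.2.1) = z}
            = prb μ {ω | X ω = z.1.1} * (prb μ {ω | a₁ * X ω = z.2}
                * prb μ {ω | v * X ω = z.1.2}) := by
          rw [← prb3_factor μ (fun ω => X ω = z.1.1) (fun ω => a₁ * X ω = z.2)
            (fun ω => v * X ω = z.1.2)]
          exact prb_congr μ3 fun t => by
            simp only [Prod.ext_iff]
            tauto
        have rhs : prb (fun r : (Ω × Ω) × Ω => ν r.1 * μ r.2)
            {r | ((X r.1.1, v * X r.1.2), a₁ * X r.2) = z}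
            = (prb μ {ω | X ω = z.1.1} * prb μ {ω | v * X ω = z.1.2})
                * prb μ {ω | a₁ * X ω = z.2} := by
          have h1 : prb (fun r : (Ω × Ω) × Ω => ν r.1 * μ r.2)
              {r | (X r.1.1 = z.1.1 ∧ v * X r.1.2 = z.1.2) ∧ a₁ * X r.2 = z.2}
              = prb ν {p | X p.1 = z.1.1 ∧ v * X p.2 = z.1.2}
                  * prb μ {ω | a₁ * X ω = z.2} :=
            prb_prod ν μ (fun p => X p.1 = z.1.1 ∧ v * X p.2 = z.1.2)
              (fun ω => a₁ * X ω = z.2)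
          have h2 : prb ν {p | X p.1 = z.1.1 ∧ v * X p.2 = z.1.2}
              = prb μ {ω | X ω = z.1.1} * prb μ {ω | v * X ω = z.1.2} :=
            prb_prod μ μ (fun ω => X ω = z.1.1) (fun ω => v * X ω = z.1.2)
          have h0' : prb (fun r : (Ω × Ω) × Ω => ν r.1 * μ r.2) {r | ((X r.1.1, v * X r.1.2), a₁ * X r.2) = z} = prb (fun r : (Ω × Ω) × Ω => ν r.1 * μ r.2) {r | (X r.1.1 = z.1.1 ∧ v * X r.1.2 = z.1.2) ∧ a₁ * X r.2 = z.2} :=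
            prb_congr _ fun r => by
              simp only [Prod.ext_iff]
              try tauto
          rw [h0', h1, h2]
        rw [lhs, rhs]
        ring
      have s4 : ent (fun r : (Ω × Ω) × Ω => ν r.1 * μ r.2)
          (fun r => ((X r.1.1, v * X r.1.2), a₁ * X r.2))
          = ent ν (fun p => (X p.1, v * X p.2)) + ent μ (fun ω => a₁ * X ω) :=
        ent_pair_indep ν μ hν hμ (fun p => (X p.1, v * X p.2)) (fun ω => a₁ * X ω)
      have s5 : ent μ (fun ω => a₁ * X ω) = H :=
        ent_comp_inj μ X (fun q : ℚ => a₁ * q) (mul_right_injective₀ hu)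
      rw [← s1, s2, s3, s4, s5, hK]
    rw [e3, eB, eBC] at h0
    linarith
end

section
/- Let X be a ℚ-valued discrete random variable with g(a) := H[X - a X'] - H[X], where X' is an independent copy of X. Then for any a₁, a₂ ∈ ℚ one has g(a₁ + a₂) ≤ g(a₁) + g(a₂) + g(1), where g(1) = d[X;X] is the entropic Ruzsa self-distance. -/
open scoped Classical
open Finset

section Basic
variable {Ω' Ω'' S T : Type*} [Fintype Ω'] [Fintype Ω''] {ν : Ω' → ℝ}

lemma prb_eq_sum_ite (ν : Ω' → ℝ) (E : Set Ω') :
    prb ν E = ∑ ω, if ω ∈ E then ν ω else 0 := by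
  rw [prb, Finset.sum_filter]

lemma prb_congr_s8 (ν : Ω' → ℝ) {E F : Set Ω'} (h : ∀ ω, ω ∈ E ↔ ω ∈ F) :
    prb ν E = prb ν F := by
  unfold prb
  congr 1
  ext ω
  simp [h ω]

lemma prb_zero (ν : Ω' → ℝ) {E : Set Ω'} (h : ∀ ω, ω ∉ E) : prb ν E = 0 := by
  rw [prb_eq_sum_ite]
  simp only [h, if_false]
  simp

lemma prb_nonneg_s8 (hν : ∀ ω, 0 ≤ ν ω) (E : Set Ω') : 0 ≤ prb ν E :=
  Finset.sum_nonneg fun ω _ => hν ω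

lemma prb_partition_s8 (ν : Ω' → ℝ) (X : Ω' → S) (E : Set Ω') :
    prb ν E = ∑ s ∈ Finset.univ.image X, prb ν (E ∩ {ω | X ω = s}) := by
  have h : ∀ s, prb ν (E ∩ {ω | X ω = s})
      = ∑ ω ∈ (Finset.univ.filter (fun ω => ω ∈ E)).filter (fun ω => X ω = s), ν ω := by
    intro s
    rw [prb, Finset.filter_filter]
    congr 1
    ext ω
    simp [Set.mem_inter_iff]
  simp_rw [h]
  rw [Finset.sum_fiberwise_of_maps_to (fun ω _ => Finset.mem_image_of_mem X (Finset.mem_univ ω))]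
  rfl

lemma prb_univ (hν : ∑ ω, ν ω = 1) : prb ν (Set.univ : Set Ω') = 1 := by
  rw [prb_eq_sum_ite]
  simpa using hν

lemma sum_prb_image (hν : ∑ ω, ν ω = 1) (X : Ω' → S) :
    ∑ s ∈ Finset.univ.image X, prb ν {ω | X ω = s} = 1 := by
  have := prb_partition_s8 ν X (Set.univ : Set Ω')
  rw [prb_univ hν] at this
  rw [this]
  exact Finset.sum_congr rfl fun s _ => prb_congr_s8 ν (by simp)

lemma ent_eq_sum_superset (ν : Ω' → ℝ) (X : Ω' → S) {A : Finset S}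
    (h : Finset.univ.image X ⊆ A) :
    ent ν X = ∑ s ∈ A, Real.negMulLog (prb ν {ω | X ω = s}) := by
  refine Finset.sum_subset h fun s _ hs => ?_
  rw [prb_zero ν fun ω hω => hs (by
    simp only [Finset.mem_image]
    exact ⟨ω, Finset.mem_univ ω, hω⟩), Real.negMulLog_zero]

lemma ent_congr_distrib {ν' : Ω'' → ℝ} {X : Ω' → S} {Y : Ω'' → S}
    (h : ∀ s, prb ν {ω | X ω = s} = prb ν' {ω | Y ω = s}) : ent ν X = ent ν' Y := by
  rw [ent_eq_sum_superset ν X (Finset.subset_union_left :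
        Finset.univ.image X ⊆ Finset.univ.image X ∪ Finset.univ.image Y),
      ent_eq_sum_superset ν' Y (Finset.subset_union_right :
        Finset.univ.image Y ⊆ Finset.univ.image X ∪ Finset.univ.image Y)]
  exact Finset.sum_congr rfl fun s _ => by rw [h s]

lemma ent_comp_mp {ν' : Ω'' → ℝ} (π : Ω' → Ω'')
    (hπ : ∀ E : Set Ω'', prb ν {ω | π ω ∈ E} = prb ν' E) (W : Ω'' → S) :
    ent ν (fun ω => W (π ω)) = ent ν' W :=
  ent_congr_distrib fun s => hπ {ω | W ω = s}

lemma mp_equiv {ν' : Ω'' → ℝ} (σ : Ω' ≃ Ω'') (hσ : ∀ ω, ν' (σ ω) = ν ω) :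
    ∀ E : Set Ω'', prb ν {ω | σ ω ∈ E} = prb ν' E := by
  intro E
  rw [prb_eq_sum_ite, prb_eq_sum_ite,
    ← Equiv.sum_comp σ (fun ω'' => if ω'' ∈ E then ν' ω'' else 0)]
  exact Finset.sum_congr rfl fun ω _ => by
    by_cases h : σ ω ∈ E <;> simp [h, hσ ω]

lemma ent_comp_eq (ν : Ω' → ℝ) (F : S → T) (hF : Function.Injective F) (X : Ω' → S) :
    ent ν (fun ω => F (X ω)) = ent ν X := by
  have himg : Finset.univ.image (fun ω => F (X ω)) = (Finset.univ.image X).image F := by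
    rw [Finset.image_image]; rfl
  rw [ent, himg, Finset.sum_image (fun a _ b _ h => hF h)]
  exact Finset.sum_congr rfl fun s _ => by
    congr 1
    exact prb_congr_s8 ν fun ω => ⟨fun h => hF h, fun h => by rw [Set.mem_setOf_eq, h]⟩

lemma ent_of_comp_eq {F : S → T} (hF : Function.Injective F) {f : Ω' → S} {g : Ω' → T}
    (hfg : ∀ ω, g ω = F (f ω)) : ent ν g = ent ν f := by
  rw [show g = fun ω => F (f ω) from funext hfg]
  exact ent_comp_eq ν F hF f

end Basic

lemma key_ineq {S T : Type*} (A : Finset S) (B : Finset T) (p : S → T → ℝ)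
    (hp : ∀ s t, 0 ≤ p s t) :
    (∑ s ∈ A, ∑ t ∈ B, Real.negMulLog (p s t))
      + Real.negMulLog (∑ s ∈ A, ∑ t ∈ B, p s t)
    ≤ (∑ s ∈ A, Real.negMulLog (∑ t ∈ B, p s t))
      + ∑ t ∈ B, Real.negMulLog (∑ s ∈ A, p s t) := by
  set P : S → ℝ := fun s => ∑ t ∈ B, p s t with hPdef
  set Q : T → ℝ := fun t => ∑ s ∈ A, p s t with hQdef
  set c : ℝ := ∑ s ∈ A, ∑ t ∈ B, p s t with hcdef
  have hP0 : ∀ s, 0 ≤ P s := fun s => Finset.sum_nonneg fun t _ => hp s t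
  have hQ0 : ∀ t, 0 ≤ Q t := fun t => Finset.sum_nonneg fun s _ => hp s t
  have hc0 : 0 ≤ c := Finset.sum_nonneg fun s _ => hP0 s
  have hPc : ∀ s ∈ A, P s ≤ c := fun s hs => Finset.single_le_sum (fun s _ => hP0 s) hs
  have hpP : ∀ s, ∀ t ∈ B, p s t ≤ P s := fun s t ht =>
    Finset.single_le_sum (fun t _ => hp s t) ht
  have hpQ : ∀ t, ∀ s ∈ A, p s t ≤ Q t := fun t s hs =>
    Finset.single_le_sum (fun s _ => hp s t) hs
  by_cases hcz : c = 0
  · have hall : ∀ s ∈ A, ∀ t ∈ B, p s t = 0 := by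
      intro s hs t ht
      have h1 : P s = 0 := le_antisymm (hcz ▸ hPc s hs) (hP0 s)
      exact (Finset.sum_eq_zero_iff_of_nonneg (fun t _ => hp s t)).1 h1 t ht
    have e1 : ∑ s ∈ A, ∑ t ∈ B, Real.negMulLog (p s t) = 0 :=
      Finset.sum_eq_zero fun s hs => Finset.sum_eq_zero fun t ht => by
        rw [hall s hs t ht, Real.negMulLog_zero]
    have e2 : ∑ s ∈ A, Real.negMulLog (P s) = 0 :=
      Finset.sum_eq_zero fun s hs => by
        rw [show P s = 0 from Finset.sum_eq_zero fun t ht => hall s hs t ht,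
          Real.negMulLog_zero]
    have e3 : ∑ t ∈ B, Real.negMulLog (Q t) = 0 :=
      Finset.sum_eq_zero fun t ht => by
        rw [show Q t = 0 from Finset.sum_eq_zero fun s hs => hall s hs t ht,
          Real.negMulLog_zero]
    rw [e1, e2, e3, hcz, Real.negMulLog_zero]
  · have hc' : 0 < c := lt_of_le_of_ne hc0 (Ne.symm hcz)
    have hsumQ : ∑ t ∈ B, Q t = c := (Finset.sum_comm).symm
    have hsumP : ∑ s ∈ A, P s = c := rfl
    have key : ∀ s ∈ A, ∀ t ∈ B, p s t - P s * Q t / c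
        ≤ p s t * (Real.log (p s t) + Real.log c - Real.log (P s) - Real.log (Q t)) := by
      intro s hs t ht
      rcases (hp s t).eq_or_lt with h | h
      · rw [← h]
        have : 0 ≤ P s * Q t / c := div_nonneg (mul_nonneg (hP0 s) (hQ0 t)) hc0
        rw [zero_mul]
        linarith
      · have hPs : 0 < P s := lt_of_lt_of_le h (hpP s t ht)
        have hQt : 0 < Q t := lt_of_lt_of_le h (hpQ t s hs)
        have h1 : Real.log (P s * Q t / (p s t * c)) ≤ P s * Q t / (p s t * c) - 1 :=
          Real.log_le_sub_one_of_pos (by positivity)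
        have h2 : Real.log (P s * Q t / (p s t * c))
            = Real.log (P s) + Real.log (Q t) - Real.log (p s t) - Real.log c := by
          rw [Real.log_div (by positivity) (by positivity), Real.log_mul hPs.ne' hQt.ne',
            Real.log_mul h.ne' hc'.ne']
          ring
        have h4 := mul_le_mul_of_nonneg_left h1 h.le
        rw [h2] at h4
        have h3 : p s t * (P s * Q t / (p s t * c) - 1) = P s * Q t / c - p s t := by
          field_simp
        rw [h3] at h4
        nlinarith [h4]
    have hq : ∑ s ∈ A, ∑ t ∈ B, P s * Q t / c = c := by
      have hrow : ∀ s, ∑ t ∈ B, P s * Q t / c = P s := by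
        intro s
        have : ∑ t ∈ B, P s * Q t / c = (P s / c) * ∑ t ∈ B, Q t := by
          rw [Finset.mul_sum]
          exact Finset.sum_congr rfl fun t _ => by ring
        rw [this, hsumQ, div_mul_cancel₀ _ hcz]
      calc ∑ s ∈ A, ∑ t ∈ B, P s * Q t / c = ∑ s ∈ A, P s :=
            Finset.sum_congr rfl fun s _ => hrow s
        _ = c := hsumP
    have hsum0 : (0:ℝ) ≤ ∑ s ∈ A, ∑ t ∈ B,
        p s t * (Real.log (p s t) + Real.log c - Real.log (P s) - Real.log (Q t)) := by
      have hle : ∑ s ∈ A, ∑ t ∈ B, (p s t - P s * Q t / c)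
          ≤ ∑ s ∈ A, ∑ t ∈ B,
            p s t * (Real.log (p s t) + Real.log c - Real.log (P s) - Real.log (Q t)) :=
        Finset.sum_le_sum fun s hs => Finset.sum_le_sum fun t ht => key s hs t ht
      have heq : ∑ s ∈ A, ∑ t ∈ B, (p s t - P s * Q t / c) = 0 := by
        simp_rw [Finset.sum_sub_distrib]
        rw [hq, ← hcdef]
        exact sub_self c
      linarith
    have i1 : ∑ s ∈ A, Real.negMulLog (P s)
        = ∑ s ∈ A, ∑ t ∈ B, (-(p s t * Real.log (P s))) := by
      refine Finset.sum_congr rfl fun s _ => ?_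
      have : P s * Real.log (P s) = ∑ t ∈ B, p s t * Real.log (P s) := Finset.sum_mul _ _ _
      simp only [Real.negMulLog, neg_mul]
      rw [this, ← Finset.sum_neg_distrib]
    have i2 : ∑ t ∈ B, Real.negMulLog (Q t)
        = ∑ s ∈ A, ∑ t ∈ B, (-(p s t * Real.log (Q t))) := by
      rw [Finset.sum_comm]
      refine Finset.sum_congr rfl fun t _ => ?_
      have : Q t * Real.log (Q t) = ∑ s ∈ A, p s t * Real.log (Q t) := Finset.sum_mul _ _ _
      simp only [Real.negMulLog, neg_mul]
      rw [this, ← Finset.sum_neg_distrib]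
    have i3 : Real.negMulLog c = ∑ s ∈ A, ∑ t ∈ B, (-(p s t * Real.log c)) := by
      have : c * Real.log c = ∑ s ∈ A, ∑ t ∈ B, p s t * Real.log c := by
        rw [hcdef, Finset.sum_mul]
        exact Finset.sum_congr rfl fun s _ => Finset.sum_mul _ _ _
      simp only [Real.negMulLog, neg_mul]
      rw [this]
      simp_rw [← Finset.sum_neg_distrib]
    have i4 : ∑ s ∈ A, ∑ t ∈ B, Real.negMulLog (p s t)
        = ∑ s ∈ A, ∑ t ∈ B, (-(p s t * Real.log (p s t))) := by
      refine Finset.sum_congr rfl fun s _ => Finset.sum_congr rfl fun t _ => ?_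
      simp [Real.negMulLog]
    have ident : (∑ s ∈ A, Real.negMulLog (P s)) + (∑ t ∈ B, Real.negMulLog (Q t))
        - (∑ s ∈ A, ∑ t ∈ B, Real.negMulLog (p s t)) - Real.negMulLog c
        = ∑ s ∈ A, ∑ t ∈ B,
            p s t * (Real.log (p s t) + Real.log c - Real.log (P s) - Real.log (Q t)) := by
      rw [i1, i2, i3, i4]
      simp_rw [← Finset.sum_add_distrib, ← Finset.sum_sub_distrib]
      exact Finset.sum_congr rfl fun s _ => Finset.sum_congr rfl fun t _ => by ring
    linarith

section Main
variable {Ω' ΩA ΩB S T Z' : Type*} [Fintype Ω'] [Fintype ΩA] [Fintype ΩB]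

lemma ent_submod_s8 (ν : Ω' → ℝ) (hν : ∀ ω, 0 ≤ ν ω)
    (U : Ω' → S) (V : Ω' → T) (W : Ω' → Z') :
    ent ν (fun ω => ((U ω, V ω), W ω)) + ent ν W
      ≤ ent ν (fun ω => (U ω, W ω)) + ent ν (fun ω => (V ω, W ω)) := by
  have eUVW : ent ν (fun ω => ((U ω, V ω), W ω))
      = ∑ z ∈ univ.image W, ∑ s ∈ univ.image U, ∑ t ∈ univ.image V,
          Real.negMulLog (prb ν {ω | U ω = s ∧ V ω = t ∧ W ω = z}) := by
    rw [ent_eq_sum_superset ν (fun ω => ((U ω, V ω), W ω))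
        (A := (univ.image U ×ˢ univ.image V) ×ˢ univ.image W) (by
      intro x hx
      simp only [Finset.mem_image, Finset.mem_univ, true_and] at hx
      obtain ⟨ω, rfl⟩ := hx
      simp only [Finset.mem_product, Finset.mem_image, Finset.mem_univ, true_and]
      exact ⟨⟨⟨ω, rfl⟩, ⟨ω, rfl⟩⟩, ⟨ω, rfl⟩⟩), Finset.sum_product, Finset.sum_product]
    calc ∑ s ∈ univ.image U, ∑ t ∈ univ.image V, ∑ z ∈ univ.image W,
          Real.negMulLog (prb ν {ω | ((U ω, V ω), W ω) = ((s, t), z)})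
        = ∑ s ∈ univ.image U, ∑ z ∈ univ.image W, ∑ t ∈ univ.image V,
          Real.negMulLog (prb ν {ω | ((U ω, V ω), W ω) = ((s, t), z)}) :=
        Finset.sum_congr rfl fun s _ => Finset.sum_comm
      _ = ∑ z ∈ univ.image W, ∑ s ∈ univ.image U, ∑ t ∈ univ.image V,
          Real.negMulLog (prb ν {ω | ((U ω, V ω), W ω) = ((s, t), z)}) := Finset.sum_comm
      _ = _ := Finset.sum_congr rfl fun z _ => Finset.sum_congr rfl fun s _ =>
          Finset.sum_congr rfl fun t _ => by
            congr 1
            exact prb_congr_s8 ν fun ω => by simp [Prod.ext_iff, and_assoc]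
  have eUW : ent ν (fun ω => (U ω, W ω))
      = ∑ z ∈ univ.image W, ∑ s ∈ univ.image U,
          Real.negMulLog (prb ν {ω | U ω = s ∧ W ω = z}) := by
    rw [ent_eq_sum_superset ν (fun ω => (U ω, W ω))
        (A := univ.image U ×ˢ univ.image W) (by
      intro x hx
      simp only [Finset.mem_image, Finset.mem_univ, true_and] at hx
      obtain ⟨ω, rfl⟩ := hx
      simp only [Finset.mem_product, Finset.mem_image, Finset.mem_univ, true_and]
      exact ⟨⟨ω, rfl⟩, ⟨ω, rfl⟩⟩), Finset.sum_product]
    calc ∑ s ∈ univ.image U, ∑ z ∈ univ.image W,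
          Real.negMulLog (prb ν {ω | (U ω, W ω) = (s, z)})
        = ∑ z ∈ univ.image W, ∑ s ∈ univ.image U,
          Real.negMulLog (prb ν {ω | (U ω, W ω) = (s, z)}) := Finset.sum_comm
      _ = _ := Finset.sum_congr rfl fun z _ => Finset.sum_congr rfl fun s _ => by
            congr 1
            exact prb_congr_s8 ν fun ω => by simp [Prod.ext_iff]
  have eVW : ent ν (fun ω => (V ω, W ω))
      = ∑ z ∈ univ.image W, ∑ t ∈ univ.image V,
          Real.negMulLog (prb ν {ω | V ω = t ∧ W ω = z}) := by
    rw [ent_eq_sum_superset ν (fun ω => (V ω, W ω))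
        (A := univ.image V ×ˢ univ.image W) (by
      intro x hx
      simp only [Finset.mem_image, Finset.mem_univ, true_and] at hx
      obtain ⟨ω, rfl⟩ := hx
      simp only [Finset.mem_product, Finset.mem_image, Finset.mem_univ, true_and]
      exact ⟨⟨ω, rfl⟩, ⟨ω, rfl⟩⟩), Finset.sum_product]
    calc ∑ t ∈ univ.image V, ∑ z ∈ univ.image W,
          Real.negMulLog (prb ν {ω | (V ω, W ω) = (t, z)})
        = ∑ z ∈ univ.image W, ∑ t ∈ univ.image V,
          Real.negMulLog (prb ν {ω | (V ω, W ω) = (t, z)}) := Finset.sum_comm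
      _ = _ := Finset.sum_congr rfl fun z _ => Finset.sum_congr rfl fun t _ => by
            congr 1
            exact prb_congr_s8 ν fun ω => by simp [Prod.ext_iff]
  have hUW : ∀ s z, prb ν {ω | U ω = s ∧ W ω = z}
      = ∑ t ∈ univ.image V, prb ν {ω | U ω = s ∧ V ω = t ∧ W ω = z} := by
    intro s z
    rw [prb_partition_s8 ν V {ω | U ω = s ∧ W ω = z}]
    exact Finset.sum_congr rfl fun t _ => prb_congr_s8 ν fun ω => by
      simp only [Set.mem_inter_iff, Set.mem_setOf_eq]
      tauto
  have hVW : ∀ t z, prb ν {ω | V ω = t ∧ W ω = z}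
      = ∑ s ∈ univ.image U, prb ν {ω | U ω = s ∧ V ω = t ∧ W ω = z} := by
    intro t z
    rw [prb_partition_s8 ν U {ω | V ω = t ∧ W ω = z}]
    exact Finset.sum_congr rfl fun s _ => prb_congr_s8 ν fun ω => by
      simp only [Set.mem_inter_iff, Set.mem_setOf_eq]
      tauto
  have hW : ∀ z, prb ν {ω | W ω = z}
      = ∑ s ∈ univ.image U, ∑ t ∈ univ.image V,
          prb ν {ω | U ω = s ∧ V ω = t ∧ W ω = z} := by
    intro z
    rw [prb_partition_s8 ν U {ω | W ω = z}]
    refine Finset.sum_congr rfl fun s _ => ?_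
    calc prb ν ({ω | W ω = z} ∩ {ω | U ω = s})
        = prb ν {ω | U ω = s ∧ W ω = z} := prb_congr_s8 ν fun ω => by
          simp only [Set.mem_inter_iff, Set.mem_setOf_eq]
          tauto
      _ = _ := hUW s z
  have eW : ent ν W = ∑ z ∈ univ.image W, Real.negMulLog (prb ν {ω | W ω = z}) := rfl
  rw [eUVW, eUW, eVW, eW, ← Finset.sum_add_distrib, ← Finset.sum_add_distrib]
  refine Finset.sum_le_sum fun z _ => ?_
  rw [hW z,
    show ∑ s ∈ univ.image U, Real.negMulLog (prb ν {ω | U ω = s ∧ W ω = z})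
      = ∑ s ∈ univ.image U, Real.negMulLog (∑ t ∈ univ.image V,
          prb ν {ω | U ω = s ∧ V ω = t ∧ W ω = z}) from
      Finset.sum_congr rfl fun s _ => by rw [hUW s z],
    show ∑ t ∈ univ.image V, Real.negMulLog (prb ν {ω | V ω = t ∧ W ω = z})
      = ∑ t ∈ univ.image V, Real.negMulLog (∑ s ∈ univ.image U,
          prb ν {ω | U ω = s ∧ V ω = t ∧ W ω = z}) from
      Finset.sum_congr rfl fun t _ => by rw [hVW t z]]
  exact key_ineq _ _ _ (fun s t => prb_nonneg_s8 hν _)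

lemma negMulLog_add_le {a b : ℝ} (ha : 0 ≤ a) (hb : 0 ≤ b) :
    Real.negMulLog (a + b) ≤ Real.negMulLog a + Real.negMulLog b := by
  rcases ha.eq_or_lt with h | h
  · rw [← h, zero_add, Real.negMulLog_zero, zero_add]
  rcases hb.eq_or_lt with h' | h'
  · rw [← h', add_zero, Real.negMulLog_zero, add_zero]
  have l1 : Real.log a ≤ Real.log (a + b) := Real.log_le_log h (by linarith)
  have l2 : Real.log b ≤ Real.log (a + b) := Real.log_le_log h' (by linarith)
  have h1 : a * Real.log a ≤ a * Real.log (a + b) := mul_le_mul_of_nonneg_left l1 ha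
  have h2 : b * Real.log b ≤ b * Real.log (a + b) := mul_le_mul_of_nonneg_left l2 hb
  simp only [Real.negMulLog, neg_mul]
  have e : (a + b) * Real.log (a + b) = a * Real.log (a + b) + b * Real.log (a + b) := by ring
  rw [e]
  linarith

lemma negMulLog_sum_le {S : Type*} (A : Finset S) (f : S → ℝ) (hf : ∀ s ∈ A, 0 ≤ f s) :
    Real.negMulLog (∑ s ∈ A, f s) ≤ ∑ s ∈ A, Real.negMulLog (f s) := by
  induction A using Finset.cons_induction with
  | empty => simp
  | cons a A' ha ih =>
    rw [Finset.sum_cons, Finset.sum_cons]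
    have h1 := negMulLog_add_le (hf a (Finset.mem_cons_self a A'))
      (Finset.sum_nonneg fun s hs => hf s (Finset.mem_cons_of_mem hs))
    have h2 := ih fun s hs => hf s (Finset.mem_cons_of_mem hs)
    linarith

lemma ent_comp_le (ν : Ω' → ℝ) (hν : ∀ ω, 0 ≤ ν ω) (F : S → T) (X : Ω' → S) :
    ent ν (fun ω => F (X ω)) ≤ ent ν X := by
  have himg : Finset.univ.image (fun ω => F (X ω)) = (Finset.univ.image X).image F := by
    rw [Finset.image_image]; rfl
  have hfib : ∀ t, prb ν {ω | F (X ω) = t}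
      = ∑ s ∈ (Finset.univ.image X).filter (fun s => F s = t), prb ν {ω | X ω = s} := by
    intro t
    rw [prb_partition_s8 ν X {ω | F (X ω) = t}, Finset.sum_filter]
    refine Finset.sum_congr rfl fun s _ => ?_
    by_cases h : F s = t
    · rw [if_pos h]
      refine prb_congr_s8 ν fun ω => ?_
      simp only [Set.mem_inter_iff, Set.mem_setOf_eq]
      exact ⟨fun hh => hh.2, fun hh => ⟨by rw [hh, h], hh⟩⟩
    · rw [if_neg h]
      refine prb_zero ν fun ω hω => ?_
      simp only [Set.mem_inter_iff, Set.mem_setOf_eq] at hω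
      exact h (hω.2 ▸ hω.1)
  unfold ent
  rw [himg]
  calc ∑ t ∈ (Finset.univ.image X).image F, Real.negMulLog (prb ν {ω | F (X ω) = t})
      ≤ ∑ t ∈ (Finset.univ.image X).image F,
          ∑ s ∈ (Finset.univ.image X).filter (fun s => F s = t),
            Real.negMulLog (prb ν {ω | X ω = s}) :=
        Finset.sum_le_sum fun t _ => by
          rw [hfib t]
          exact negMulLog_sum_le _ _ fun s _ => prb_nonneg_s8 hν _
    _ = ∑ s ∈ Finset.univ.image X, Real.negMulLog (prb ν {ω | X ω = s}) :=
        Finset.sum_fiberwise_of_maps_to (fun s hs => Finset.mem_image_of_mem F hs) _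

lemma ent_const (ν : Ω' → ℝ) (hν : IsProb ν) (t₀ : T) : ent ν (fun _ => t₀) = 0 := by
  have hne : Nonempty Ω' := by
    by_contra h
    rw [not_nonempty_iff] at h
    have h2 := hν.2
    rw [Finset.univ_eq_empty, Finset.sum_empty] at h2
    norm_num at h2
  haveI := hne
  unfold ent
  rw [show Finset.univ.image (fun _ : Ω' => t₀) = {t₀} from
    Finset.image_const Finset.univ_nonempty t₀, Finset.sum_singleton]
  have h : prb ν {ω | (fun _ : Ω' => t₀) ω = t₀} = 1 := by
    rw [← prb_univ hν.2]
    exact prb_congr_s8 ν fun ω => by simp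
  rw [h, Real.negMulLog_one]

lemma ent_subadd (ν : Ω' → ℝ) (hν : IsProb ν) (f : Ω' → S) (g : Ω' → T) :
    ent ν (fun ω => (f ω, g ω)) ≤ ent ν f + ent ν g := by
  have h := ent_submod_s8 ν hν.1 f g (fun _ => (0 : Fin 1))
  have e1 : ent ν (fun ω => ((f ω, g ω), (0 : Fin 1))) = ent ν (fun ω => (f ω, g ω)) :=
    ent_comp_eq ν (fun x => (x, (0 : Fin 1))) (fun a b hh => congrArg Prod.fst hh) _
  have e2 : ent ν (fun ω => (f ω, (0 : Fin 1))) = ent ν f :=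
    ent_comp_eq ν (fun x => (x, (0 : Fin 1))) (fun a b hh => congrArg Prod.fst hh) f
  have e3 : ent ν (fun ω => (g ω, (0 : Fin 1))) = ent ν g :=
    ent_comp_eq ν (fun x => (x, (0 : Fin 1))) (fun a b hh => congrArg Prod.fst hh) g
  have e4 : ent ν (fun _ : Ω' => (0 : Fin 1)) = 0 := ent_const ν hν 0
  linarith [h, e1, e2, e3, e4]

lemma ent_prod (μA : ΩA → ℝ) (μB : ΩB → ℝ) (hA : IsProb μA) (hB : IsProb μB)
    (U : ΩA → S) (V : ΩB → T) :
    ent (fun p : ΩA × ΩB => μA p.1 * μB p.2) (fun p => (U p.1, V p.2))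
      = ent μA U + ent μB V := by
  have hfac : ∀ s t, prb (fun p : ΩA × ΩB => μA p.1 * μB p.2) {p | (U p.1, V p.2) = (s, t)}
      = prb μA {a | U a = s} * prb μB {b | V b = t} := by
    intro s t
    rw [prb_eq_sum_ite, prb_eq_sum_ite, prb_eq_sum_ite, Finset.sum_mul_sum,
      Fintype.sum_prod_type]
    refine Finset.sum_congr rfl fun a _ => Finset.sum_congr rfl fun b _ => ?_
    by_cases h1 : U a = s <;> by_cases h2 : V b = t <;>
      simp [h1, h2, Prod.ext_iff, Set.mem_setOf_eq]
  rw [ent_eq_sum_superset (fun p : ΩA × ΩB => μA p.1 * μB p.2) (fun p => (U p.1, V p.2))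
      (A := Finset.univ.image U ×ˢ Finset.univ.image V) (by
    intro x hx
    simp only [Finset.mem_image, Finset.mem_univ, true_and] at hx
    obtain ⟨p, rfl⟩ := hx
    simp only [Finset.mem_product, Finset.mem_image, Finset.mem_univ, true_and]
    exact ⟨⟨p.1, rfl⟩, ⟨p.2, rfl⟩⟩), Finset.sum_product]
  have e : ∑ s ∈ Finset.univ.image U, ∑ t ∈ Finset.univ.image V,
      Real.negMulLog (prb (fun p : ΩA × ΩB => μA p.1 * μB p.2) {p | (U p.1, V p.2) = (s, t)})
      = ∑ s ∈ Finset.univ.image U, ∑ t ∈ Finset.univ.image V,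
        (prb μB {b | V b = t} * Real.negMulLog (prb μA {a | U a = s})
          + prb μA {a | U a = s} * Real.negMulLog (prb μB {b | V b = t})) :=
    Finset.sum_congr rfl fun s _ => Finset.sum_congr rfl fun t _ => by
      rw [hfac s t, Real.negMulLog_mul]
  rw [e]
  simp_rw [Finset.sum_add_distrib]
  have f1 : ∑ s ∈ Finset.univ.image U, ∑ t ∈ Finset.univ.image V,
      prb μB {b | V b = t} * Real.negMulLog (prb μA {a | U a = s}) = ent μA U := by
    calc ∑ s ∈ Finset.univ.image U, ∑ t ∈ Finset.univ.image V,
        prb μB {b | V b = t} * Real.negMulLog (prb μA {a | U a = s})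
        = ∑ s ∈ Finset.univ.image U, Real.negMulLog (prb μA {a | U a = s}) :=
          Finset.sum_congr rfl fun s _ => by
            rw [← Finset.sum_mul, sum_prb_image hB.2, one_mul]
      _ = ent μA U := rfl
  have f2 : ∑ s ∈ Finset.univ.image U, ∑ t ∈ Finset.univ.image V,
      prb μA {a | U a = s} * Real.negMulLog (prb μB {b | V b = t}) = ent μB V := by
    have hinner : ∑ t ∈ Finset.univ.image V, Real.negMulLog (prb μB {b | V b = t})
        = ent μB V := rfl
    calc ∑ s ∈ Finset.univ.image U, ∑ t ∈ Finset.univ.image V,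
        prb μA {a | U a = s} * Real.negMulLog (prb μB {b | V b = t})
        = ∑ s ∈ Finset.univ.image U, prb μA {a | U a = s} * ent μB V :=
          Finset.sum_congr rfl fun s _ => by rw [← Finset.mul_sum, hinner]
      _ = (∑ s ∈ Finset.univ.image U, prb μA {a | U a = s}) * ent μB V := by
          rw [← Finset.sum_mul]
      _ = ent μB V := by rw [sum_prb_image hA.2, one_mul]
  rw [f1, f2]

lemma prb_fst_s8 (μA : ΩA → ℝ) (μB : ΩB → ℝ) (hB : ∑ b, μB b = 1) (E : Set ΩA) :
    prb (fun p : ΩA × ΩB => μA p.1 * μB p.2) {p | p.1 ∈ E} = prb μA E := by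
  rw [prb_eq_sum_ite, prb_eq_sum_ite, Fintype.sum_prod_type]
  refine Finset.sum_congr rfl fun a _ => ?_
  by_cases h : a ∈ E
  · simp only [Set.mem_setOf_eq, h, if_true]
    rw [← Finset.mul_sum, hB, mul_one]
  · simp [Set.mem_setOf_eq, h]

lemma prb_snd_s8 (μA : ΩA → ℝ) (μB : ΩB → ℝ) (hA : ∑ a, μA a = 1) (E : Set ΩB) :
    prb (fun p : ΩA × ΩB => μA p.1 * μB p.2) {p | p.2 ∈ E} = prb μB E := by
  rw [prb_eq_sum_ite, prb_eq_sum_ite, Fintype.sum_prod_type_right]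
  refine Finset.sum_congr rfl fun b _ => ?_
  by_cases h : b ∈ E
  · simp only [Set.mem_setOf_eq, h, if_true]
    rw [← Finset.sum_mul, hA, one_mul]
  · simp [Set.mem_setOf_eq, h]

lemma ent_fst (μA : ΩA → ℝ) (μB : ΩB → ℝ) (hB : ∑ b, μB b = 1) (W : ΩA → S) :
    ent (fun p : ΩA × ΩB => μA p.1 * μB p.2) (fun p => W p.1) = ent μA W :=
  ent_comp_mp Prod.fst (fun E => prb_fst_s8 μA μB hB E) W

lemma ent_snd (μA : ΩA → ℝ) (μB : ΩB → ℝ) (hA : ∑ a, μA a = 1) (W : ΩB → S) :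
    ent (fun p : ΩA × ΩB => μA p.1 * μB p.2) (fun p => W p.2) = ent μB W :=
  ent_comp_mp Prod.snd (fun E => prb_snd_s8 μA μB hA E) W

end Main
section MainProof

/-- Swap of coordinates 2 and 3 on the triple product space. -/
def tauEquiv {Ω : Type*} : ((Ω × Ω) × Ω) ≃ ((Ω × Ω) × Ω) where
  toFun p := ((p.1.1, p.2), p.1.2)
  invFun p := ((p.1.1, p.2), p.1.2)
  left_inv := by rintro ⟨⟨x, y⟩, z⟩; rfl
  right_inv := by rintro ⟨⟨x, y⟩, z⟩; rfl

/-- Swap of coordinates 1 and 3 on the triple product space. -/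
def rhoEquiv {Ω : Type*} : ((Ω × Ω) × Ω) ≃ ((Ω × Ω) × Ω) where
  toFun p := ((p.2, p.1.2), p.1.1)
  invFun p := ((p.2, p.1.2), p.1.1)
  left_inv := by rintro ⟨⟨x, y⟩, z⟩; rfl
  right_inv := by rintro ⟨⟨x, y⟩, z⟩; rfl

lemma inj_sub_fst : Function.Injective (fun u : ℚ × ℚ => (u.1, u.2 - u.1)) := by
  rintro ⟨u1, u2⟩ ⟨v1, v2⟩ h
  simp only [Prod.mk.injEq] at h ⊢
  constructor <;> [exact h.1; linarith [h.1, h.2]]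

lemma inj_add_fst : Function.Injective (fun u : ℚ × ℚ => (u.1, u.2 + u.1)) := by
  rintro ⟨u1, u2⟩ ⟨v1, v2⟩ h
  simp only [Prod.mk.injEq] at h ⊢
  constructor <;> [exact h.1; linarith [h.1, h.2]]

lemma inj_add_snd : Function.Injective (fun u : ℚ × ℚ => (u.2 + u.1, u.1)) := by
  rintro ⟨u1, u2⟩ ⟨v1, v2⟩ h
  simp only [Prod.mk.injEq] at h ⊢
  constructor <;> [exact h.2; linarith [h.1, h.2]]

lemma inj_sub_one : Function.Injective (fun u : ℚ × ℚ => (u.1 - 1 * u.2, u.2)) := by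
  rintro ⟨u1, u2⟩ ⟨v1, v2⟩ h
  simp only [Prod.mk.injEq] at h ⊢
  constructor <;> [linarith [h.1, h.2]; exact h.2]

lemma inj_triple1 :
    Function.Injective (fun u : (ℚ × ℚ) × ℚ => ((u.2 + u.1.2, u.1.2), u.2 + u.1.2 - u.1.1)) := by
  rintro ⟨⟨a1, a2⟩, a3⟩ ⟨⟨b1, b2⟩, b3⟩ h
  simp only [Prod.mk.injEq] at h ⊢
  obtain ⟨⟨h1, h2⟩, h3⟩ := h
  refine ⟨⟨?_, ?_⟩, ?_⟩ <;> linarith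

lemma inj_triple2 :
    Function.Injective (fun u : (ℚ × ℚ) × ℚ => ((u.2 + u.1.1 + u.1.2, u.1.1), u.1.2)) := by
  rintro ⟨⟨a1, a2⟩, a3⟩ ⟨⟨b1, b2⟩, b3⟩ h
  simp only [Prod.mk.injEq] at h ⊢
  obtain ⟨⟨h1, h2⟩, h3⟩ := h
  refine ⟨⟨?_, ?_⟩, ?_⟩ <;> linarith

lemma isProb_mu2 {Ω : Type*} [Fintype Ω] {μ : Ω → ℝ} (hμ : IsProb μ) :
    IsProb (fun q : Ω × Ω => μ q.1 * μ q.2) := by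
  constructor
  · exact fun q => mul_nonneg (hμ.1 q.1) (hμ.1 q.2)
  · rw [Fintype.sum_prod_type]
    calc ∑ a, ∑ b, μ a * μ b = ∑ a, μ a * ∑ b, μ b :=
          Finset.sum_congr rfl fun a _ => (Finset.mul_sum _ _ _).symm
      _ = 1 := by rw [hμ.2]; simpa using hμ.2

lemma isProb_mu3 {Ω : Type*} [Fintype Ω] {μ : Ω → ℝ} (hμ : IsProb μ) :
    IsProb (fun p : (Ω × Ω) × Ω => μ p.1.1 * μ p.1.2 * μ p.2) := by
  have hμ2 := isProb_mu2 hμ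
  constructor
  · exact fun p => mul_nonneg (mul_nonneg (hμ.1 p.1.1) (hμ.1 p.1.2)) (hμ.1 p.2)
  · rw [Fintype.sum_prod_type]
    calc ∑ q : Ω × Ω, ∑ b, μ q.1 * μ q.2 * μ b
        = ∑ q : Ω × Ω, (μ q.1 * μ q.2) * ∑ b, μ b :=
          Finset.sum_congr rfl fun q _ => (Finset.mul_sum _ _ _).symm
      _ = 1 := by rw [hμ.2]; simpa using hμ2.2

lemma main_aux {Ω : Type*} [Fintype Ω] (μ : Ω → ℝ) (hμ : IsProb μ) (X : Ω → ℚ)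
    (a b : ℚ) (hb : b ≠ 0) :
    ent (fun q : Ω × Ω => μ q.1 * μ q.2) (fun q => X q.1 - (a + b) * X q.2) + 2 * ent μ X
      ≤ ent (fun q : Ω × Ω => μ q.1 * μ q.2) (fun q => X q.1 - a * X q.2)
        + ent (fun q : Ω × Ω => μ q.1 * μ q.2) (fun q => X q.1 - b * X q.2)
        + ent (fun q : Ω × Ω => μ q.1 * μ q.2) (fun q => X q.1 - 1 * X q.2) := by
  have hμ2 : IsProb (fun q : Ω × Ω => μ q.1 * μ q.2) := isProb_mu2 hμ
  have hμ3 : IsProb (fun p : (Ω × Ω) × Ω => μ p.1.1 * μ p.1.2 * μ p.2) := isProb_mu3 hμ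
  have hν3 : ∀ p : (Ω × Ω) × Ω, 0 ≤ μ p.1.1 * μ p.1.2 * μ p.2 := hμ3.1
  -- ====== Improved Ruzsa part ======
  -- U = X1 - a X2 - b X3 ("S - Z"), V = b X2 ("Y"), W = X1 - a X2 - b X2 ("S - Y")
  have r1 : ent (fun p : (Ω × Ω) × Ω => μ p.1.1 * μ p.1.2 * μ p.2)
        (fun p => ((X p.1.1 - a * X p.1.2 - b * X p.2, b * X p.1.2),
          X p.1.1 - a * X p.1.2 - b * X p.1.2))
      + ent (fun p : (Ω × Ω) × Ω => μ p.1.1 * μ p.1.2 * μ p.2)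
        (fun p => X p.1.1 - a * X p.1.2 - b * X p.1.2)
      ≤ ent (fun p : (Ω × Ω) × Ω => μ p.1.1 * μ p.1.2 * μ p.2)
        (fun p => (X p.1.1 - a * X p.1.2 - b * X p.2,
          X p.1.1 - a * X p.1.2 - b * X p.1.2))
      + ent (fun p : (Ω × Ω) × Ω => μ p.1.1 * μ p.1.2 * μ p.2)
        (fun p => (b * X p.1.2, X p.1.1 - a * X p.1.2 - b * X p.1.2)) :=
    ent_submod_s8 _ hν3 _ _ _
  have r2 : ent (fun p : (Ω × Ω) × Ω => μ p.1.1 * μ p.1.2 * μ p.2)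
        (fun p => (X p.1.1 - a * X p.1.2 - b * X p.2, b * X p.2 - b * X p.1.2))
      = ent (fun p : (Ω × Ω) × Ω => μ p.1.1 * μ p.1.2 * μ p.2)
        (fun p => (X p.1.1 - a * X p.1.2 - b * X p.2,
          X p.1.1 - a * X p.1.2 - b * X p.1.2)) :=
    ent_of_comp_eq inj_sub_fst (fun p => Prod.ext_iff.mpr ⟨by ring, by ring⟩)
  have r3 : ent (fun p : (Ω × Ω) × Ω => μ p.1.1 * μ p.1.2 * μ p.2)
        (fun p => (X p.1.1 - a * X p.1.2 - b * X p.2, b * X p.2 - b * X p.1.2))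
      ≤ ent (fun p : (Ω × Ω) × Ω => μ p.1.1 * μ p.1.2 * μ p.2)
          (fun p => X p.1.1 - a * X p.1.2 - b * X p.2)
        + ent (fun p : (Ω × Ω) × Ω => μ p.1.1 * μ p.1.2 * μ p.2)
          (fun p => b * X p.2 - b * X p.1.2) :=
    ent_subadd _ hμ3 _ _
  have r4 : ent (fun p : (Ω × Ω) × Ω => μ p.1.1 * μ p.1.2 * μ p.2)
        (fun p => (X p.1.1 - a * X p.1.2, b * X p.1.2))
      = ent (fun p : (Ω × Ω) × Ω => μ p.1.1 * μ p.1.2 * μ p.2)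
        (fun p => (b * X p.1.2, X p.1.1 - a * X p.1.2 - b * X p.1.2)) :=
    ent_of_comp_eq inj_add_snd (fun p => Prod.ext_iff.mpr ⟨by ring, by ring⟩)
  have r4b : ent (fun p : (Ω × Ω) × Ω => μ p.1.1 * μ p.1.2 * μ p.2)
        (fun p => (X p.1.1 - a * X p.1.2, b * X p.1.2))
      = ent (fun q : Ω × Ω => μ q.1 * μ q.2) (fun q => (X q.1 - a * X q.2, b * X q.2)) :=
    ent_fst (fun q : Ω × Ω => μ q.1 * μ q.2) μ hμ.2
      (fun q => (X q.1 - a * X q.2, b * X q.2))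
  have r5 : ent (fun p : (Ω × Ω) × Ω => μ p.1.1 * μ p.1.2 * μ p.2)
        (fun p => ((X p.1.1 - a * X p.1.2, b * X p.1.2), b * X p.2))
      = ent (fun p : (Ω × Ω) × Ω => μ p.1.1 * μ p.1.2 * μ p.2)
        (fun p => ((X p.1.1 - a * X p.1.2 - b * X p.2, b * X p.1.2),
          X p.1.1 - a * X p.1.2 - b * X p.1.2)) :=
    ent_of_comp_eq inj_triple1
      (fun p => Prod.ext_iff.mpr ⟨Prod.ext_iff.mpr ⟨by ring, by ring⟩, by ring⟩)
  have r6 : ent (fun p : (Ω × Ω) × Ω => μ p.1.1 * μ p.1.2 * μ p.2)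
        (fun p => ((X p.1.1 - a * X p.1.2, b * X p.1.2), b * X p.2))
      = ent (fun q : Ω × Ω => μ q.1 * μ q.2) (fun q => (X q.1 - a * X q.2, b * X q.2))
        + ent μ (fun ω => b * X ω) :=
    ent_prod (fun q : Ω × Ω => μ q.1 * μ q.2) μ hμ2 hμ
      (fun q => (X q.1 - a * X q.2, b * X q.2)) (fun ω => b * X ω)
  have r7 : ent μ (fun ω => b * X ω) = ent μ X :=
    ent_comp_eq μ (fun x => b * x) (mul_right_injective₀ hb) X
  have r8a : ent (fun p : (Ω × Ω) × Ω => μ p.1.1 * μ p.1.2 * μ p.2)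
        (fun p => b * X p.2 - b * X p.1.2)
      = ent (fun p : (Ω × Ω) × Ω => μ p.1.1 * μ p.1.2 * μ p.2)
        (fun p => X p.2 - 1 * X p.1.2) :=
    ent_of_comp_eq (F := fun x : ℚ => b * x) (mul_right_injective₀ hb) (fun p => by ring)
  have r8b : ent (fun p : (Ω × Ω) × Ω => μ p.1.1 * μ p.1.2 * μ p.2)
        (fun p => X p.2 - 1 * X p.1.2)
      = ent (fun p : (Ω × Ω) × Ω => μ p.1.1 * μ p.1.2 * μ p.2)
        (fun p => X p.1.1 - 1 * X p.1.2) :=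
    ent_comp_mp rhoEquiv
      (mp_equiv rhoEquiv (fun p => by simp only [rhoEquiv, Equiv.coe_fn_mk]; ring))
      (fun r => X r.1.1 - 1 * X r.1.2)
  have r8c : ent (fun p : (Ω × Ω) × Ω => μ p.1.1 * μ p.1.2 * μ p.2)
        (fun p => X p.1.1 - 1 * X p.1.2)
      = ent (fun q : Ω × Ω => μ q.1 * μ q.2) (fun q => X q.1 - 1 * X q.2) :=
    ent_fst (fun q : Ω × Ω => μ q.1 * μ q.2) μ hμ.2 (fun q => X q.1 - 1 * X q.2)
  have r9 : ent (fun p : (Ω × Ω) × Ω => μ p.1.1 * μ p.1.2 * μ p.2)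
        (fun p => X p.1.1 - a * X p.1.2 - b * X p.1.2)
      = ent (fun p : (Ω × Ω) × Ω => μ p.1.1 * μ p.1.2 * μ p.2)
        (fun p => X p.1.1 - (a + b) * X p.1.2) := by
    congr 1
    funext p
    ring
  have r9b : ent (fun p : (Ω × Ω) × Ω => μ p.1.1 * μ p.1.2 * μ p.2)
        (fun p => X p.1.1 - (a + b) * X p.1.2)
      = ent (fun q : Ω × Ω => μ q.1 * μ q.2) (fun q => X q.1 - (a + b) * X q.2) :=
    ent_fst (fun q : Ω × Ω => μ q.1 * μ q.2) μ hμ.2 (fun q => X q.1 - (a + b) * X q.2)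
  -- ====== KVM part ======
  have k1 : ent (fun p : (Ω × Ω) × Ω => μ p.1.1 * μ p.1.2 * μ p.2)
        (fun p => ((a * X p.1.2, b * X p.2), X p.1.1 - a * X p.1.2 - b * X p.2))
      + ent (fun p : (Ω × Ω) × Ω => μ p.1.1 * μ p.1.2 * μ p.2)
        (fun p => X p.1.1 - a * X p.1.2 - b * X p.2)
      ≤ ent (fun p : (Ω × Ω) × Ω => μ p.1.1 * μ p.1.2 * μ p.2)
        (fun p => (a * X p.1.2, X p.1.1 - a * X p.1.2 - b * X p.2))
      + ent (fun p : (Ω × Ω) × Ω => μ p.1.1 * μ p.1.2 * μ p.2)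
        (fun p => (b * X p.2, X p.1.1 - a * X p.1.2 - b * X p.2)) :=
    ent_submod_s8 _ hν3 _ _ _
  have k2a : ent (fun p : (Ω × Ω) × Ω => μ p.1.1 * μ p.1.2 * μ p.2)
        (fun p => (a * X p.1.2, X p.1.1 - b * X p.2))
      = ent (fun p : (Ω × Ω) × Ω => μ p.1.1 * μ p.1.2 * μ p.2)
        (fun p => (a * X p.1.2, X p.1.1 - a * X p.1.2 - b * X p.2)) :=
    ent_of_comp_eq inj_add_fst (fun p => Prod.ext_iff.mpr ⟨by ring, by ring⟩)
  have k2b : ent (fun p : (Ω × Ω) × Ω => μ p.1.1 * μ p.1.2 * μ p.2)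
        (fun p => (a * X p.1.2, X p.1.1 - b * X p.2))
      = ent (fun p : (Ω × Ω) × Ω => μ p.1.1 * μ p.1.2 * μ p.2)
        (fun p => (X p.1.1 - b * X p.2, a * X p.1.2)) :=
    ent_of_comp_eq Prod.swap_injective (fun p => rfl)
  have k2c : ent (fun p : (Ω × Ω) × Ω => μ p.1.1 * μ p.1.2 * μ p.2)
        (fun p => (X p.1.1 - b * X p.2, a * X p.1.2))
      = ent (fun p : (Ω × Ω) × Ω => μ p.1.1 * μ p.1.2 * μ p.2)
        (fun r => (X r.1.1 - b * X r.1.2, a * X r.2)) :=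
    ent_comp_mp tauEquiv
      (mp_equiv tauEquiv (fun p => by simp only [tauEquiv, Equiv.coe_fn_mk]; ring))
      (fun r => (X r.1.1 - b * X r.1.2, a * X r.2))
  have k2d : ent (fun p : (Ω × Ω) × Ω => μ p.1.1 * μ p.1.2 * μ p.2)
        (fun r => (X r.1.1 - b * X r.1.2, a * X r.2))
      = ent (fun q : Ω × Ω => μ q.1 * μ q.2) (fun q => X q.1 - b * X q.2)
        + ent μ (fun ω => a * X ω) :=
    ent_prod (fun q : Ω × Ω => μ q.1 * μ q.2) μ hμ2 hμ
      (fun q => X q.1 - b * X q.2) (fun ω => a * X ω)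
  have k3a : ent (fun p : (Ω × Ω) × Ω => μ p.1.1 * μ p.1.2 * μ p.2)
        (fun p => (b * X p.2, X p.1.1 - a * X p.1.2))
      = ent (fun p : (Ω × Ω) × Ω => μ p.1.1 * μ p.1.2 * μ p.2)
        (fun p => (b * X p.2, X p.1.1 - a * X p.1.2 - b * X p.2)) :=
    ent_of_comp_eq inj_add_fst (fun p => Prod.ext_iff.mpr ⟨by ring, by ring⟩)
  have k3b : ent (fun p : (Ω × Ω) × Ω => μ p.1.1 * μ p.1.2 * μ p.2)
        (fun p => (b * X p.2, X p.1.1 - a * X p.1.2))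
      = ent (fun p : (Ω × Ω) × Ω => μ p.1.1 * μ p.1.2 * μ p.2)
        (fun p => (X p.1.1 - a * X p.1.2, b * X p.2)) :=
    ent_of_comp_eq Prod.swap_injective (fun p => rfl)
  have k3c : ent (fun p : (Ω × Ω) × Ω => μ p.1.1 * μ p.1.2 * μ p.2)
        (fun p => (X p.1.1 - a * X p.1.2, b * X p.2))
      = ent (fun q : Ω × Ω => μ q.1 * μ q.2) (fun q => X q.1 - a * X q.2)
        + ent μ (fun ω => b * X ω) :=
    ent_prod (fun q : Ω × Ω => μ q.1 * μ q.2) μ hμ2 hμ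
      (fun q => X q.1 - a * X q.2) (fun ω => b * X ω)
  have k4a : ent (fun p : (Ω × Ω) × Ω => μ p.1.1 * μ p.1.2 * μ p.2)
        (fun p => ((X p.1.1, a * X p.1.2), b * X p.2))
      = ent (fun p : (Ω × Ω) × Ω => μ p.1.1 * μ p.1.2 * μ p.2)
        (fun p => ((a * X p.1.2, b * X p.2), X p.1.1 - a * X p.1.2 - b * X p.2)) :=
    ent_of_comp_eq inj_triple2
      (fun p => Prod.ext_iff.mpr ⟨Prod.ext_iff.mpr ⟨by ring, by ring⟩, by ring⟩)
  have k4b : ent (fun p : (Ω × Ω) × Ω => μ p.1.1 * μ p.1.2 * μ p.2)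
        (fun p => ((X p.1.1, a * X p.1.2), b * X p.2))
      = ent (fun q : Ω × Ω => μ q.1 * μ q.2) (fun q => (X q.1, a * X q.2))
        + ent μ (fun ω => b * X ω) :=
    ent_prod (fun q : Ω × Ω => μ q.1 * μ q.2) μ hμ2 hμ
      (fun q => (X q.1, a * X q.2)) (fun ω => b * X ω)
  have k4c : ent (fun q : Ω × Ω => μ q.1 * μ q.2) (fun q => (X q.1, a * X q.2))
      = ent μ X + ent μ (fun ω => a * X ω) :=
    ent_prod μ μ hμ hμ X (fun ω => a * X ω)
  linarith [r1, r2, r3, r4, r4b, r5, r6, r7, r8a, r8b, r8c, r9, r9b,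
    k1, k2a, k2b, k2c, k2d, k3a, k3b, k3c, k4a, k4b, k4c]

end MainProof


/-- subadditivity `g(a₁ + a₂) ≤ g(a₁) + g(a₂) + g(1)`. -/
theorem gfun_add_le {Ω : Type*} [Fintype Ω] (μ : Ω → ℝ) (hμ : IsProb μ)
    (X : Ω → ℚ) (a₁ a₂ : ℚ) :
    gfun μ X (a₁ + a₂) ≤ gfun μ X a₁ + gfun μ X a₂ + gfun μ X 1 := by

  have hμ2 : IsProb (fun q : Ω × Ω => μ q.1 * μ q.2) := isProb_mu2 hμ
  by_cases hb : a₂ = 0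
  · subst hb
    have hg0 : ent (fun q : Ω × Ω => μ q.1 * μ q.2) (fun q => X q.1 - 0 * X q.2)
        = ent μ X := by
      have e1 : ent (fun q : Ω × Ω => μ q.1 * μ q.2) (fun q => X q.1 - 0 * X q.2)
          = ent (fun q : Ω × Ω => μ q.1 * μ q.2) (fun q : Ω × Ω => X q.1) := by
        congr 1
        funext q
        ring
      rw [e1]
      exact ent_fst μ μ hμ.2 X
    have hg1 : ent μ X ≤ ent (fun q : Ω × Ω => μ q.1 * μ q.2)
        (fun q => X q.1 - 1 * X q.2) := by
      have j1 : ent (fun q : Ω × Ω => μ q.1 * μ q.2)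
            (fun q => (X q.1 - 1 * X q.2, X q.2))
          = ent (fun q : Ω × Ω => μ q.1 * μ q.2) (fun q => (X q.1, X q.2)) :=
        ent_of_comp_eq inj_sub_one (fun q => Prod.ext_iff.mpr ⟨by ring, rfl⟩)
      have j2 : ent (fun q : Ω × Ω => μ q.1 * μ q.2) (fun q => (X q.1, X q.2))
          = ent μ X + ent μ X := ent_prod μ μ hμ hμ X X
      have j3 : ent (fun q : Ω × Ω => μ q.1 * μ q.2)
            (fun q => (X q.1 - 1 * X q.2, X q.2))
          ≤ ent (fun q : Ω × Ω => μ q.1 * μ q.2) (fun q => X q.1 - 1 * X q.2)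
            + ent (fun q : Ω × Ω => μ q.1 * μ q.2) (fun q : Ω × Ω => X q.2) :=
        ent_subadd _ hμ2 _ _
      have j4 : ent (fun q : Ω × Ω => μ q.1 * μ q.2) (fun q : Ω × Ω => X q.2)
          = ent μ X := ent_snd μ μ hμ.2 X
      linarith
    simp only [gfun, add_zero]
    linarith
  · have h := main_aux μ hμ X a₁ a₂ hb
    simp only [gfun]
    linarith
end
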